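/- arXiv:1812.11515 — 2 statements merged into one kernel-verified Lean document; each statement's English description precedes it below -/
import Mathlib

section
/- Let X, U be real Banach spaces and H a real Hilbert space. Suppose F : X × U → H is continuously (Fréchet) differentiable with respect to (x,u) ∈ X × U, that for every u ∈ U the functional φ : X → ℝ, φ(x) = ½‖F(x,u)‖², satisfies the Palais–Smale condition, and that the partial differential F_x'(x,u) : X → H is bijective for every (x,u) ∈ X × U. Then there exists a unique function λ : U → X such that F(λ(u),u) = 0 for all u ∈ U; moreover λ is of class C¹ and its differential at u is λ'(u) = −[F_x'(λ(u),u)]^{-1} ∘ F_u'(λ(u),u). -/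
open Filter Topology

noncomputable section

/-- A `C¹` functional `I : X → ℝ` satisfies the Palais–Smale condition if every sequence
`(x k)` with `(I (x k))` bounded and `‖I' (x k)‖ → 0` admits a convergent subsequence. -/
def PalaisSmale {X : Type*} [NormedAddCommGroup X] [NormedSpace ℝ X] (I : X → ℝ) : Prop :=
  ∀ x : ℕ → X, (∃ M : ℝ, ∀ k, |I (x k)| ≤ M) →
    Tendsto (fun k => ‖fderiv ℝ I (x k)‖) atTop (𝓝 0) →
    ∃ (x₀ : X) (φ : ℕ → ℕ), StrictMono φ ∧ Tendsto (fun k => x (φ k)) atTop (𝓝 x₀)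


set_option maxHeartbeats 1000000

/-- Ekeland's variational principle (weak form). -/
theorem my_ekeland {E : Type*} [MetricSpace E] [CompleteSpace E]
    (ψ : E → ℝ) (hlsc : LowerSemicontinuous ψ) {B : ℝ} (hB : ∀ x, B ≤ ψ x)
    {κ : ℝ} (hκ : 0 < κ) (x₀ : E) :
    ∃ z, ψ z ≤ ψ x₀ ∧ ∀ y, ψ y + κ * dist z y ≤ ψ z → y = z := by
  -- the set of "better" points
  set S : E → Set E := fun x => {y | ψ y + κ * dist x y ≤ ψ x} with hSdef
  have hmemS : ∀ x, x ∈ S x := by intro x; simp [hSdef]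
  have hex : ∀ n : ℕ, ∀ x : E, ∃ y ∈ S x,
      ∀ z ∈ S x, ψ y < ψ z + (1/2)^n := by
    intro n x
    have hne : (ψ '' S x).Nonempty := ⟨ψ x, x, hmemS x, rfl⟩
    have hbdd : BddBelow (ψ '' S x) := ⟨B, by rintro - ⟨y, -, rfl⟩; exact hB y⟩
    obtain ⟨-, ⟨y, hy, rfl⟩, hy2⟩ :=
      exists_lt_of_csInf_lt hne (by
        have : (0:ℝ) < (1/2)^n := by positivity
        linarith [le_refl (sInf (ψ '' S x))] :
        sInf (ψ '' S x) < sInf (ψ '' S x) + (1/2)^n)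
    refine ⟨y, hy, fun z hz => lt_of_lt_of_le hy2 ?_⟩
    have : sInf (ψ '' S x) ≤ ψ z := csInf_le hbdd ⟨z, hz, rfl⟩
    linarith
  choose nxt hnxt1 hnxt2 using hex
  set seq : ℕ → E := fun n => Nat.recAux x₀ (fun n x => nxt n x) n with hseq
  have hseq0 : seq 0 = x₀ := rfl
  have hseqS : ∀ n, seq (n+1) ∈ S (seq n) := fun n => hnxt1 n (seq n)
  have hanti : ∀ n, ψ (seq (n+1)) + κ * dist (seq n) (seq (n+1)) ≤ ψ (seq n) :=
    fun n => hseqS n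
  have hmono : ∀ {m n : ℕ}, m ≤ n → ψ (seq n) + κ * dist (seq m) (seq n) ≤ ψ (seq m) := by
    intro m n hmn
    induction n, hmn using Nat.le_induction with
    | base => simp
    | succ n hmn ih =>
      have h1 := hanti n
      have htri : dist (seq m) (seq (n+1)) ≤ dist (seq m) (seq n) + dist (seq n) (seq (n+1)) :=
        dist_triangle _ _ _
      nlinarith [dist_nonneg (x := seq m) (y := seq n)]
  have hantiψ : Antitone fun n => ψ (seq n) := by
    refine antitone_nat_of_succ_le fun n => ?_
    have := hanti n
    nlinarith [dist_nonneg (x := seq n) (y := seq (n+1))]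
  have hbddb : BddBelow (Set.range fun n => ψ (seq n)) := ⟨B, by rintro - ⟨n, rfl⟩; exact hB _⟩
  set L := ⨅ n, ψ (seq n) with hL
  have htendL : Tendsto (fun n => ψ (seq n)) atTop (𝓝 L) := tendsto_atTop_ciInf hantiψ hbddb
  have hLle : ∀ n, L ≤ ψ (seq n) := fun n => ciInf_le hbddb n
  -- Cauchy
  have hcauchy : CauchySeq seq := by
    refine cauchySeq_of_le_tendsto_0 (fun n => (ψ (seq n) - L) / κ) ?_ ?_
    · intro n m N hn hm
      rcases le_total n m with h | h
      · have h1 := hmono h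
        have h2 : ψ (seq n) ≤ ψ (seq N) := hantiψ hn
        have h3 := hLle m
        rw [dist_comm (seq n) (seq m)] at h1
        rw [dist_comm, le_div_iff₀ hκ]
        nlinarith
      · have h1 := hmono h
        have h2 : ψ (seq m) ≤ ψ (seq N) := hantiψ hm
        have h3 := hLle n
        rw [dist_comm, le_div_iff₀ hκ]
        nlinarith
    · have : Tendsto (fun n => (ψ (seq n) - L) / κ) atTop (𝓝 ((L - L)/κ)) :=
        ((htendL.sub tendsto_const_nhds).div_const κ)
      simpa using this
  obtain ⟨z, hz⟩ := cauchySeq_tendsto_of_complete hcauchy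
  have hψz : ψ z ≤ L := by
    by_contra h
    push_neg at h
    obtain ⟨y, hy1, hy2⟩ := exists_between h
    have h1 : ∀ᶠ n in atTop, y < ψ (seq n) := hz.eventually (hlsc z y hy2)
    have h2 : ∀ᶠ n in atTop, ψ (seq n) < y := htendL.eventually_lt_const hy1
    obtain ⟨n, hn1, hn2⟩ := (h1.and h2).exists
    linarith
  -- z is in every S (seq n)
  have hzS : ∀ n, ψ z + κ * dist (seq n) z ≤ ψ (seq n) := by
    intro n
    have h1 : Tendsto (fun m => ψ (seq m) + κ * dist (seq n) (seq m)) atTop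
        (𝓝 (L + κ * dist (seq n) z)) :=
      htendL.add (tendsto_const_nhds.mul (((continuous_const.dist continuous_id).tendsto z).comp hz))
    have h2 : L + κ * dist (seq n) z ≤ ψ (seq n) :=
      le_of_tendsto h1 (eventually_atTop.2 ⟨n, fun m hm => hmono hm⟩)
    nlinarith [dist_nonneg (x := seq n) (y := z), hψz]
  refine ⟨z, ?_, ?_⟩
  · have := hzS 0
    rw [hseq0] at this
    nlinarith [dist_nonneg (x := x₀) (y := z)]
  · intro y hy
    -- y ∈ S (seq n) for all n
    have hyS : ∀ n, ψ y + κ * dist (seq n) y ≤ ψ (seq n) := by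
      intro n
      have htri : dist (seq n) y ≤ dist (seq n) z + dist z y := dist_triangle _ _ _
      have := hzS n
      nlinarith
    have hyL : L ≤ ψ y := by
      have h1 : ∀ n, ψ (seq (n+1)) < ψ y + (1/2)^n := fun n => hnxt2 n (seq n) y (hyS n)
      have h2 : Tendsto (fun n : ℕ => ψ y + (1/2)^n) atTop (𝓝 (ψ y + 0)) :=
        tendsto_const_nhds.add (tendsto_pow_atTop_nhds_zero_of_lt_one (by norm_num) (by norm_num))
      rw [add_zero] at h2
      exact le_of_tendsto_of_tendsto' (htendL.comp (tendsto_add_atTop_nat 1)) h2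
        (fun n => (h1 n).le)
    have hdd : dist z y ≤ 0 := by nlinarith [hψz]
    exact (dist_le_zero.mp hdd).symm


section Aux
variable {X : Type*} [NormedAddCommGroup X] [NormedSpace ℝ X]
variable {H : Type*} [NormedAddCommGroup H] [InnerProductSpace ℝ H]

/-- Derivative of `x ↦ ½‖f x‖²`. -/
theorem half_norm_sq_hasFDerivAt {f : X → H} {f' : X →L[ℝ] H} {x : X}
    (hf : HasFDerivAt f f' x) :
    HasFDerivAt (fun y => (1 / 2 : ℝ) * ‖f y‖ ^ 2)
      ((innerSL ℝ (f x)).comp f') x := by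
  have h1 : HasFDerivAt (fun y => (inner ℝ (f y) (f y) : ℝ))
      ((fderivInnerCLM ℝ (f x, f x)).comp (f'.prod f')) x := hf.inner ℝ hf
  have h2 := h1.const_mul (1/2 : ℝ)
  have h3 : (fun y => (1/2 : ℝ) * (inner ℝ (f y) (f y) : ℝ))
      = fun y => (1 / 2 : ℝ) * ‖f y‖ ^ 2 := by
    funext y; rw [real_inner_self_eq_norm_sq]
  rw [h3] at h2
  refine h2.congr_fderiv ?_
  ext w
  simp [fderivInnerCLM_apply, real_inner_comm]
  ring

/-- If `φ y ≥ φ z - κ dist z y` for all `y` then `‖Dφ(z)‖ ≤ κ`. -/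
theorem norm_fderiv_le_of_ekeland {φ : X → ℝ} {D : X →L[ℝ] ℝ} {z : X}
    (hd : HasFDerivAt φ D z) {κ : ℝ} (hκ : 0 ≤ κ)
    (h : ∀ y, φ z - κ * dist z y ≤ φ y) : ‖D‖ ≤ κ := by
  refine D.opNorm_le_bound hκ fun w => ?_
  have hline : ∀ t : ℝ, HasDerivAt (fun t : ℝ => z + t • w) w t := by
    intro t
    simpa using ((hasDerivAt_id t).smul_const w).const_add z
  set g : ℝ → ℝ := fun t => φ (z + t • w) with hg
  have hgd : HasDerivAt g (D w) 0 := by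
    have hd' : HasFDerivAt φ D (z + (0:ℝ) • w) := by simpa using hd
    exact hd'.comp_hasDerivAt 0 (hline 0)
  have hbound : ∀ t : ℝ, g 0 - κ * (|t| * ‖w‖) ≤ g t := by
    intro t
    have := h (z + t • w)
    simpa [hg, dist_eq_norm, norm_smul, abs_mul] using this
  have hslope := hasDerivAt_iff_tendsto_slope.mp hgd
  have hlow : -(κ * ‖w‖) ≤ D w := by
    have h1 : Tendsto (slope g 0) (𝓝[>] 0) (𝓝 (D w)) :=
      hslope.mono_left (nhdsWithin_mono 0 fun t ht => ne_of_gt ht)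
    refine ge_of_tendsto h1 ?_
    filter_upwards [self_mem_nhdsWithin] with t (ht : 0 < t)
    have hb := hbound t
    rw [abs_of_pos ht] at hb
    rw [slope_def_field, sub_zero, le_div_iff₀ ht]
    nlinarith
  have hhigh : D w ≤ κ * ‖w‖ := by
    have h1 : Tendsto (slope g 0) (𝓝[<] 0) (𝓝 (D w)) :=
      hslope.mono_left (nhdsWithin_mono 0 fun t ht => ne_of_lt ht)
    refine le_of_tendsto h1 ?_
    filter_upwards [self_mem_nhdsWithin] with t (ht : t < 0)
    have hb := hbound t
    rw [abs_of_neg ht] at hb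
    rw [slope_def_field, sub_zero, div_le_iff_of_neg ht]
    nlinarith
  rw [Real.norm_eq_abs, abs_le]
  constructor <;> linarith

variable [CompleteSpace X] [CompleteSpace H]

/-- If `g` has nonpositive derivative on `[0,1]`, then `g 1 ≤ g 0`. -/
theorem my_deriv_nonpos_le {g g' : ℝ → ℝ}
    (hg : ∀ τ : ℝ, HasDerivAt g (g' τ) τ)
    (h0 : ∀ τ ∈ Set.Icc (0:ℝ) 1, g' τ ≤ 0) : g 1 ≤ g 0 := by
  have hmono := antitoneOn_of_deriv_nonpos (convex_Icc (0:ℝ) 1)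
    (fun τ _ => (hg τ).continuousAt.continuousWithinAt)
    (fun τ hτ => (hg τ).differentiableAt.differentiableWithinAt)
    (fun τ hτ => by
      rw [(hg τ).deriv]
      exact h0 τ (interior_subset hτ))
  exact hmono (Set.left_mem_Icc.mpr zero_le_one) (Set.right_mem_Icc.mpr zero_le_one) zero_le_one

section MP

variable {X : Type*} [NormedAddCommGroup X] [NormedSpace ℝ X] [CompleteSpace X]

/-- Quantitative mountain pass: a near-critical point at the mountain-pass level. -/
theorem mountain_pass_aux (φ : X → ℝ) (hφc : Continuous φ) (hφnn : ∀ x, 0 ≤ φ x)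
    (hφd : ∀ x, HasFDerivAt φ (fderiv ℝ φ x) x)
    (hcontD : Continuous fun x => fderiv ℝ φ x)
    (a b : X) (hφa : φ a = 0) (hφb : φ b = 0) (c : ℝ)
    (hcle : ∀ γ : C(unitInterval, X), γ 0 = a → γ 1 = b → c ≤ ⨆ t, φ (γ t))
    (hclt : ∀ ε : ℝ, 0 < ε → ∃ γ : C(unitInterval, X), γ 0 = a ∧ γ 1 = b ∧
      (⨆ t, φ (γ t)) < c + ε)
    (δ : ℝ) (hδ : 0 < δ) (hδc : δ ≤ c/4) :
    ∃ x, |φ x - c| ≤ δ ∧ ‖fderiv ℝ φ x‖ ≤ δ := by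
  by_contra hno
  push_neg at hno
  set ΓS : Set C(unitInterval, X) := {γ | γ 0 = a ∧ γ 1 = b} with hΓSdef
  have hΓcl : IsClosed ΓS := by
    apply IsClosed.inter
    · exact isClosed_eq (continuous_eval_const 0) continuous_const
    · exact isClosed_eq (continuous_eval_const 1) continuous_const
  haveI : CompleteSpace ΓS := hΓcl.completeSpace_coe
  set ψ : ΓS → ℝ := fun γ => ⨆ t, φ (γ.1 t) with hψdef
  have hbddγ : ∀ γ : ΓS, BddAbove (Set.range fun t => φ (γ.1 t)) :=
    fun γ => (isCompact_range (hφc.comp γ.1.continuous)).bddAbove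
  have hψ_ge : ∀ (γ : ΓS) (t : unitInterval), φ (γ.1 t) ≤ ψ γ :=
    fun γ t => le_ciSup (hbddγ γ) t
  have hψ_le : ∀ (γ : ΓS) (M : ℝ), (∀ t, φ (γ.1 t) ≤ M) → ψ γ ≤ M :=
    fun γ M h => ciSup_le h
  have hψnn : ∀ γ : ΓS, 0 ≤ ψ γ := fun γ => le_trans (hφnn _) (hψ_ge γ 0)
  have hψlsc : LowerSemicontinuous ψ := by
    intro γ y hy
    obtain ⟨t, ht⟩ := exists_lt_of_lt_ciSup hy
    have hmem : {w : X | y < φ w} ∈ 𝓝 (γ.1 t) :=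
      (isOpen_lt continuous_const hφc).mem_nhds ht
    obtain ⟨dd, hdd, hball⟩ := Metric.mem_nhds_iff.mp hmem
    filter_upwards [Metric.ball_mem_nhds γ hdd] with η hη
    have h1 : dist (η.1 t) (γ.1 t) < dd := by
      calc dist (η.1 t) (γ.1 t) ≤ dist η.1 γ.1 := ContinuousMap.dist_apply_le_dist t
        _ = dist η γ := (Subtype.dist_eq η γ).symm
        _ < dd := hη
    exact lt_of_lt_of_le (hball h1) (hψ_ge η t)
  obtain ⟨γ₀c, hγ₀1, hγ₀2, hγ₀3⟩ := hclt (δ/2) (by linarith)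
  set γ₀ : ΓS := ⟨γ₀c, hγ₀1, hγ₀2⟩ with hγ₀def
  obtain ⟨γb, hγb1, hγb2⟩ := my_ekeland ψ hψlsc hψnn (show (0:ℝ) < δ/8 by linarith) γ₀
  set m : ℝ := ψ γb with hmdef
  have hm1 : c ≤ m := hcle γb.1 γb.2.1 γb.2.2
  have hm2 : m < c + δ/2 := lt_of_le_of_lt hγb1 hγ₀3
  set β : ℝ := δ/2 with hβdef
  have hβpos : 0 < β := by rw [hβdef]; linarith
  have hmβ : 0 < m - β := by rw [hβdef]; linarith
  set θ : unitInterval → ℝ := fun s => max 0 (min 1 ((φ (γb.1 s) - (m - β)) * (2/β)))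
    with hθdef
  have hθcont : Continuous θ := by
    apply Continuous.max continuous_const
    apply Continuous.min continuous_const
    exact ((hφc.comp γb.1.continuous).sub continuous_const).mul continuous_const
  have hθ01 : ∀ s, 0 ≤ θ s ∧ θ s ≤ 1 :=
    fun s => ⟨le_max_left _ _, max_le zero_le_one (min_le_left _ _)⟩
  have hθ0 : ∀ s, φ (γb.1 s) ≤ m - β → θ s = 0 := by
    intro s hs
    have h1 : (φ (γb.1 s) - (m - β)) * (2/β) ≤ 0 :=
      mul_nonpos_of_nonpos_of_nonneg (by linarith) (by positivity)
    simp only [hθdef]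
    rw [max_eq_left (le_trans (min_le_right _ _) h1)]
  have hθ1 : ∀ s, m - β/2 ≤ φ (γb.1 s) → θ s = 1 := by
    intro s hs
    have h1 : (1:ℝ) ≤ (φ (γb.1 s) - (m - β)) * (2/β) := by
      have h2 : (β/2) * (2/β) ≤ (φ (γb.1 s) - (m - β)) * (2/β) :=
        mul_le_mul_of_nonneg_right (by linarith) (by positivity)
      have h3 : (β/2) * (2/β) = 1 := by field_simp
      linarith
    simp only [hθdef]
    rw [min_eq_left h1, max_eq_right zero_le_one]
  have hθS : ∀ s, θ s ≠ 0 → m - β ≤ φ (γb.1 s) := by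
    intro s h
    by_contra h2
    push_neg at h2
    exact h (hθ0 s h2.le)
  set S : Set unitInterval := {s | m - β ≤ φ (γb.1 s)} with hSdef
  have hScl : IsClosed S := isClosed_le continuous_const (hφc.comp γb.1.continuous)
  have hScomp : IsCompact S := hScl.isCompact
  have hSne : S.Nonempty := by
    obtain ⟨s₀, -, hs₀⟩ := isCompact_univ.exists_isMaxOn Set.univ_nonempty
      (hφc.comp γb.1.continuous).continuousOn
    refine ⟨s₀, ?_⟩
    have h1 : m ≤ φ (γb.1 s₀) := hψ_le γb _ fun t => hs₀ (Set.mem_univ t)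
    show m - β ≤ _
    linarith
  have hband : ∀ s ∈ S, |φ (γb.1 s) - c| ≤ δ := by
    intro s hs
    have h1 : φ (γb.1 s) ≤ m := hψ_ge γb s
    have h2 : m - β ≤ φ (γb.1 s) := hs
    rw [abs_le]
    constructor
    · rw [hβdef] at h2; linarith
    · linarith
  have hdir : ∀ s : S, ∃ (w : X) (r : ℝ), 0 < r ∧ ‖w‖ ≤ 1 ∧
      ∀ y : X, ‖y - γb.1 s.1‖ ≤ 2*r → δ/2 ≤ (fderiv ℝ φ y) w := by
    intro s
    have hgt : (3/4)*δ < ‖fderiv ℝ φ (γb.1 s.1)‖ :=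
      lt_of_lt_of_le (by linarith) (hno _ (hband s.1 s.2)).le
    obtain ⟨w₀, hw₀1, hw₀2⟩ := (fderiv ℝ φ (γb.1 s.1)).exists_lt_apply_of_lt_opNorm hgt
    have hw : ∃ w : X, ‖w‖ ≤ 1 ∧ (3/4)*δ < (fderiv ℝ φ (γb.1 s.1)) w := by
      rcases le_or_gt 0 ((fderiv ℝ φ (γb.1 s.1)) w₀) with h | h
      · exact ⟨w₀, hw₀1.le, by rwa [Real.norm_eq_abs, abs_of_nonneg h] at hw₀2⟩
      · refine ⟨-w₀, by simpa using hw₀1.le, ?_⟩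
        rw [map_neg]
        rw [Real.norm_eq_abs, abs_of_neg h] at hw₀2
        linarith
    obtain ⟨w, hw1, hw2⟩ := hw
    have hcw : Continuous fun y => (fderiv ℝ φ y) w := hcontD.clm_apply continuous_const
    have hmem : {y : X | δ/2 < (fderiv ℝ φ y) w} ∈ 𝓝 (γb.1 s.1) :=
      (isOpen_lt continuous_const hcw).mem_nhds (by show δ/2 < _; linarith)
    obtain ⟨ε₁, hε₁, hball₁⟩ := Metric.mem_nhds_iff.mp hmem
    refine ⟨w, ε₁/3, by positivity, hw1, fun y hy => ?_⟩
    have hmem2 : y ∈ Metric.ball (γb.1 s.1) ε₁ := by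
      rw [Metric.mem_ball, dist_eq_norm]
      calc ‖y - γb.1 s.1‖ ≤ 2*(ε₁/3) := hy
        _ < ε₁ := by linarith
    exact (hball₁ hmem2).le
  choose w r hr hwn hkey using hdir
  set UU : S → Set unitInterval := fun i => {s | ‖γb.1 s - γb.1 i.1‖ < r i} with hUUdef
  have hUopen : ∀ i, IsOpen (UU i) := fun i =>
    isOpen_lt ((γb.1.continuous.sub continuous_const).norm) continuous_const
  have hUcover : S ⊆ ⋃ i, UU i := fun s hs => Set.mem_iUnion.2 ⟨⟨s, hs⟩, by
    show ‖γb.1 s - γb.1 s‖ < _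
    simpa using hr ⟨s, hs⟩⟩
  obtain ⟨T, hT⟩ := hScomp.elim_finite_subcover UU hUopen hUcover
  have hTne : T.Nonempty := by
    obtain ⟨s₀, hs₀⟩ := hSne
    have h1 := hT hs₀
    rw [Set.mem_iUnion₂] at h1
    obtain ⟨i, hi, -⟩ := h1
    exact ⟨i, hi⟩
  set d : S → unitInterval → ℝ := fun i s => max 0 (r i - ‖γb.1 s - γb.1 i.1‖) with hddef
  have hdcont : ∀ i, Continuous (d i) := fun i =>
    continuous_const.max (continuous_const.sub ((γb.1.continuous.sub continuous_const).norm))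
  have hdnn : ∀ i s, 0 ≤ d i s := fun i s => le_max_left _ _
  have hdpos : ∀ i s, 0 < d i s ↔ s ∈ UU i := by
    intro i s
    simp only [hddef, hUUdef, lt_max_iff, lt_self_iff_false, false_or, sub_pos,
      Set.mem_setOf_eq]
  set Dd : unitInterval → ℝ := fun s => ∑ i ∈ T, d i s with hDddef
  have hDdcont : Continuous Dd := continuous_finset_sum _ fun i _ => hdcont i
  have hDdnn : ∀ s, 0 ≤ Dd s := fun s => Finset.sum_nonneg fun i _ => hdnn i s
  have hDdpos : ∀ s ∈ S, 0 < Dd s := by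
    intro s hs
    have h1 := hT hs
    rw [Set.mem_iUnion₂] at h1
    obtain ⟨i, hiT, hi⟩ := h1
    exact Finset.sum_pos' (fun j _ => hdnn j s) ⟨i, hiT, (hdpos i s).mpr hi⟩
  obtain ⟨s₁, hs₁S, hs₁min⟩ := hScomp.exists_isMinOn hSne hDdcont.continuousOn
  set ρ₂ : ℝ := Dd s₁ with hρ₂def
  have hρ₂pos : 0 < ρ₂ := hDdpos s₁ hs₁S
  have hρ₂le : ∀ s ∈ S, ρ₂ ≤ Dd s := fun s hs => hs₁min hs
  have hMx : ∀ s, 0 < max (Dd s) (ρ₂/2) := fun s => lt_max_of_lt_right (by linarith)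
  set χ : S → unitInterval → ℝ := fun i s => (θ s / max (Dd s) (ρ₂/2)) * d i s with hχdef
  have hχnn : ∀ i s, 0 ≤ χ i s := fun i s =>
    mul_nonneg (div_nonneg (hθ01 s).1 (hMx s).le) (hdnn i s)
  have hχsum : ∀ s, ∑ i ∈ T, χ i s = (θ s / max (Dd s) (ρ₂/2)) * Dd s := by
    intro s
    simp only [hχdef, hDddef]
    rw [Finset.mul_sum]
  have hχsumle : ∀ s, ∑ i ∈ T, χ i s ≤ θ s := by
    intro s
    rw [hχsum]
    have h1 : Dd s ≤ max (Dd s) (ρ₂/2) := le_max_left _ _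
    calc (θ s / max (Dd s) (ρ₂/2)) * Dd s
        ≤ (θ s / max (Dd s) (ρ₂/2)) * max (Dd s) (ρ₂/2) :=
          mul_le_mul_of_nonneg_left h1 (div_nonneg (hθ01 s).1 (hMx s).le)
      _ = θ s := div_mul_cancel₀ _ (hMx s).ne'
  have hχsumeq : ∀ s, θ s ≠ 0 → ∑ i ∈ T, χ i s = θ s := by
    intro s hθs
    have hsS : s ∈ S := hθS s hθs
    have h1 : max (Dd s) (ρ₂/2) = Dd s := max_eq_left (by linarith [hρ₂le s hsS])
    rw [hχsum, h1, div_mul_cancel₀ _ (ne_of_gt (hDdpos s hsS))]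
  have hχmem : ∀ i s, χ i s ≠ 0 → s ∈ UU i := by
    intro i s h
    by_contra h2
    have h3 : d i s = 0 := by
      rcases eq_or_lt_of_le (hdnn i s) with h3 | h3
      · exact h3.symm
      · exact absurd ((hdpos i s).mp h3) h2
    simp only [hχdef, h3, mul_zero, ne_eq, not_true_eq_false] at h
  set W : unitInterval → X := fun s => ∑ i ∈ T, χ i s • w i with hWdef
  have hWcont : Continuous W := continuous_finset_sum _ fun i _ =>
    (((hθcont.div (hDdcont.max continuous_const) fun s => (hMx s).ne').mul
      (hdcont i)).smul continuous_const)
  have hWnorm : ∀ s, ‖W s‖ ≤ θ s := by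
    intro s
    calc ‖W s‖ ≤ ∑ i ∈ T, ‖χ i s • w i‖ := norm_sum_le _ _
      _ ≤ ∑ i ∈ T, χ i s := Finset.sum_le_sum fun i _ => by
          rw [norm_smul, Real.norm_eq_abs, abs_of_nonneg (hχnn i s)]
          calc χ i s * ‖w i‖ ≤ χ i s * 1 := mul_le_mul_of_nonneg_left (hwn i) (hχnn i s)
            _ = χ i s := mul_one _
      _ ≤ θ s := hχsumle s
  set rb : ℝ := T.inf' hTne r with hrbdef
  have hrbpos : 0 < rb := by
    rw [hrbdef, Finset.lt_inf'_iff]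
    exact fun i _ => hr i
  have hrble : ∀ i ∈ T, rb ≤ r i := fun i hi => Finset.inf'_le r hi
  set h0 : ℝ := min rb (β/δ) with hh0def
  have hh0pos : 0 < h0 := lt_min hrbpos (by positivity)
  set ηf : unitInterval → X := fun s => γb.1 s - h0 • W s with hηfdef
  have hηcont : Continuous ηf := γb.1.continuous.sub (continuous_const.smul hWcont)
  have hθa : θ 0 = 0 := by
    apply hθ0
    rw [γb.2.1, hφa]
    linarith
  have hθb : θ 1 = 0 := by
    apply hθ0
    rw [γb.2.2, hφb]
    linarith
  have hW0 : ∀ t, θ t = 0 → W t = 0 := by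
    intro t ht
    rw [hWdef]
    apply Finset.sum_eq_zero
    intro i hi
    simp only [hχdef, ht, zero_div, zero_mul, zero_smul]
  set ηc : C(unitInterval, X) := ⟨ηf, hηcont⟩ with hηcdef
  have hηmem : ηc ∈ ΓS := by
    constructor
    · show ηf 0 = a
      rw [hηfdef]
      simp only [hW0 0 hθa, smul_zero, sub_zero]
      exact γb.2.1
    · show ηf 1 = b
      rw [hηfdef]
      simp only [hW0 1 hθb, smul_zero, sub_zero]
      exact γb.2.2
  set η : ΓS := ⟨ηc, hηmem⟩ with hηdef
  have hdec : ∀ s, φ (ηf s) ≤ φ (γb.1 s) - (δ/2) * h0 * ∑ i ∈ T, χ i s := by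
    intro s
    set q : ℝ := (δ/2) * h0 * ∑ i ∈ T, χ i s with hqdef
    set v : X := h0 • W s with hvdef
    set g : ℝ → ℝ := fun τ => φ (γb.1 s - τ • v) + q * τ with hgdef
    have hline : ∀ τ : ℝ, HasDerivAt (fun τ : ℝ => γb.1 s - τ • v) (-v) τ := by
      intro τ
      simpa using ((hasDerivAt_id τ).smul_const v).const_sub (γb.1 s)
    have hgder : ∀ τ : ℝ, HasDerivAt g ((fderiv ℝ φ (γb.1 s - τ • v)) (-v) + q) τ := by
      intro τ
      have h2 := (hφd (γb.1 s - τ • v)).comp_hasDerivAt τ (hline τ)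
      have h3 : HasDerivAt (fun τ : ℝ => q * τ) q τ := by
        simpa using (hasDerivAt_id τ).const_mul q
      exact h2.add h3
    have hDbound : ∀ τ ∈ Set.Icc (0:ℝ) 1,
        (fderiv ℝ φ (γb.1 s - τ • v)) (-v) + q ≤ 0 := by
      intro τ hτ
      set y : X := γb.1 s - τ • v with hydef
      have h1 : (fderiv ℝ φ y) (-v) = -(h0 * ∑ i ∈ T, χ i s * (fderiv ℝ φ y) (w i)) := by
        rw [map_neg, hvdef, map_smul, hWdef, map_sum]
        simp only [map_smul, smul_eq_mul]
      have h2 : (δ/2) * ∑ i ∈ T, χ i s ≤ ∑ i ∈ T, χ i s * (fderiv ℝ φ y) (w i) := by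
        rw [Finset.mul_sum]
        refine Finset.sum_le_sum fun i hi => ?_
        rcases eq_or_lt_of_le (hχnn i s) with h3 | h3
        · rw [← h3]
          simp
        · have hsU : s ∈ UU i := hχmem i s h3.ne'
          have hd1 : ‖y - γb.1 s‖ ≤ h0 := by
            rw [hydef]
            have h4 : γb.1 s - τ • v - γb.1 s = -(τ • v) := by abel
            rw [h4, norm_neg, hvdef, smul_smul, norm_smul, Real.norm_eq_abs]
            have h5 : |τ * h0| = τ * h0 := abs_of_nonneg (mul_nonneg hτ.1 hh0pos.le)
            rw [h5]
            calc τ * h0 * ‖W s‖ ≤ τ * h0 * 1 :=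
                mul_le_mul_of_nonneg_left (le_trans (hWnorm s) (hθ01 s).2)
                  (mul_nonneg hτ.1 hh0pos.le)
              _ = τ * h0 := mul_one _
              _ ≤ 1 * h0 := mul_le_mul_of_nonneg_right hτ.2 hh0pos.le
              _ = h0 := one_mul _
          have hykey : ‖y - γb.1 i.1‖ ≤ 2 * r i := by
            have h4 : y - γb.1 i.1 = (y - γb.1 s) + (γb.1 s - γb.1 i.1) := by abel
            have h6 : h0 ≤ r i := le_trans (min_le_left _ _) (hrble i hi)
            have h7 : ‖γb.1 s - γb.1 i.1‖ < r i := hsU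
            calc ‖y - γb.1 i.1‖ = ‖(y - γb.1 s) + (γb.1 s - γb.1 i.1)‖ := by rw [h4]
              _ ≤ ‖y - γb.1 s‖ + ‖γb.1 s - γb.1 i.1‖ := norm_add_le _ _
              _ ≤ h0 + r i := add_le_add hd1 h7.le
              _ ≤ 2 * r i := by linarith
          have h5 := hkey i y hykey
          rw [mul_comm (δ/2) (χ i s)]
          exact mul_le_mul_of_nonneg_left h5 (hχnn i s)
      rw [h1, hqdef]
      nlinarith [mul_le_mul_of_nonneg_left h2 hh0pos.le]
    have hgc : ContinuousOn g (Set.Icc 0 1) :=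
      fun τ _ => (hgder τ).continuousAt.continuousWithinAt
    have hmono := antitoneOn_of_deriv_nonpos (convex_Icc (0:ℝ) 1) hgc
      (fun τ hτ => (hgder τ).differentiableAt.differentiableWithinAt)
      (fun τ hτ => by
        rw [(hgder τ).deriv]
        exact hDbound τ (interior_subset hτ))
    have h6 := hmono (Set.left_mem_Icc.mpr zero_le_one) (Set.right_mem_Icc.mpr zero_le_one)
      zero_le_one
    simp only [hgdef, zero_smul, sub_zero, one_smul, mul_one, mul_zero, add_zero] at h6
    rw [hηfdef]
    simp only [hvdef] at h6
    rw [hqdef] at h6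
    linarith
  have hub : ∀ s, φ (ηf s) ≤ m - (δ/2) * h0 := by
    intro s
    rcases le_or_gt (m - β/2) (φ (γb.1 s)) with hcase | hcase
    · have hθ1' : θ s = 1 := hθ1 s hcase
      have hsum : ∑ i ∈ T, χ i s = 1 := by
        rw [hχsumeq s (by rw [hθ1']; norm_num), hθ1']
      have h1 := hdec s
      rw [hsum, mul_one] at h1
      have h2 : φ (γb.1 s) ≤ m := hψ_ge γb s
      linarith
    · have h1 := hdec s
      have h2 : 0 ≤ (δ/2) * h0 * ∑ i ∈ T, χ i s :=
        mul_nonneg (mul_nonneg (by linarith) hh0pos.le)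
          (Finset.sum_nonneg fun i _ => hχnn i s)
      have h3 : (δ/2) * h0 ≤ β/2 := by
        have h4 : h0 ≤ β/δ := min_le_right _ _
        calc (δ/2) * h0 ≤ (δ/2) * (β/δ) :=
            mul_le_mul_of_nonneg_left h4 (by linarith)
          _ = β/2 := by field_simp
      linarith
  have hψη : ψ η ≤ m - (δ/2) * h0 :=
    hψ_le η (m - (δ/2) * h0) fun t => hub t
  have hdistη : dist γb η ≤ h0 := by
    rw [Subtype.dist_eq]
    show dist γb.1 ηc ≤ h0
    rw [ContinuousMap.dist_le hh0pos.le]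
    intro t
    rw [dist_eq_norm]
    show ‖γb.1 t - ηf t‖ ≤ h0
    rw [hηfdef]
    simp only [sub_sub_cancel]
    rw [norm_smul, Real.norm_eq_abs, abs_of_nonneg hh0pos.le]
    calc h0 * ‖W t‖ ≤ h0 * 1 :=
        mul_le_mul_of_nonneg_left (le_trans (hWnorm t) (hθ01 t).2) hh0pos.le
      _ = h0 := mul_one _
  have happ : η = γb := by
    apply hγb2
    have h1 : ψ η + δ/8 * dist γb η ≤ (m - (δ/2)*h0) + (δ/8)*h0 :=
      add_le_add hψη (mul_le_mul_of_nonneg_left hdistη (by linarith))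
    calc ψ η + δ/8 * dist γb η ≤ (m - (δ/2)*h0) + (δ/8)*h0 := h1
      _ ≤ m := by nlinarith
  have hfin : ψ η = m := by rw [happ]
  have hpos2 : (0:ℝ) < (δ/2) * h0 := mul_pos (by linarith) hh0pos
  linarith

end MP

/-- The key lemma: existence and uniqueness of a zero. -/
theorem exists_unique_zero (f : X → H) (hf : ContDiff ℝ 1 f)
    (hPS : PalaisSmale (fun x => (1 / 2 : ℝ) * ‖f x‖ ^ 2))
    (hbij : ∀ x, Function.Bijective (fderiv ℝ f x)) :
    ∃! x, f x = 0 := by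
  set φ : X → ℝ := fun x => (1 / 2 : ℝ) * ‖f x‖ ^ 2 with hφdef
  have hφnn : ∀ x, 0 ≤ φ x := fun x => by positivity
  have hfd : ∀ x, HasFDerivAt f (fderiv ℝ f x) x :=
    fun x => (hf.differentiable one_ne_zero x).hasFDerivAt
  have hDφ : ∀ x, HasFDerivAt φ ((innerSL ℝ (f x)).comp (fderiv ℝ f x)) x :=
    fun x => half_norm_sq_hasFDerivAt (hfd x)
  have hfderivφ : ∀ x, fderiv ℝ φ x = (innerSL ℝ (f x)).comp (fderiv ℝ f x) :=
    fun x => (hDφ x).fderiv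
  have hφ1 : ContDiff ℝ 1 φ := by
    have h1 : ContDiff ℝ 1 fun x => (inner ℝ (f x) (f x) : ℝ) := hf.inner ℝ hf
    have h2 : φ = fun x => (1/2 : ℝ) * (inner ℝ (f x) (f x) : ℝ) := by
      funext x; rw [real_inner_self_eq_norm_sq, hφdef]
    rw [h2]
    exact contDiff_const.mul h1
  have hφc : Continuous φ := hφ1.continuous
  have hcontD : Continuous fun x => fderiv ℝ φ x := (contDiff_one_iff_fderiv.mp hφ1).2
  have hcrit : ∀ x, fderiv ℝ φ x = 0 → f x = 0 := by
    intro x hx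
    obtain ⟨v, hv⟩ := (hbij x).2 (f x)
    have h1 : (fderiv ℝ φ x) v = 0 := by rw [hx]; rfl
    rw [hfderivφ x] at h1
    simp only [ContinuousLinearMap.coe_comp', Function.comp_apply, innerSL_apply_apply, hv] at h1
    exact inner_self_eq_zero.mp h1
  -- a criticality extractor from Palais-Smale sequences
  have hPSlim : ∀ x : ℕ → X, (∃ M : ℝ, ∀ k, |φ (x k)| ≤ M) →
      (∀ k, ‖fderiv ℝ φ (x k)‖ ≤ 1 / (k + 1)) →
      ∃ (z : X) (σ : ℕ → ℕ), StrictMono σ ∧ Tendsto (fun k => x (σ k)) atTop (𝓝 z) ∧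
        f z = 0 := by
    intro x hM hk
    have htend0 : Tendsto (fun k => ‖fderiv ℝ φ (x k)‖) atTop (𝓝 0) := by
      refine squeeze_zero (fun k => norm_nonneg _) hk ?_
      exact tendsto_one_div_add_atTop_nhds_zero_nat
    obtain ⟨z, σ, hσ, htend⟩ := hPS x hM htend0
    refine ⟨z, σ, hσ, htend, ?_⟩
    apply hcrit
    have h1 : Tendsto (fun k => ‖fderiv ℝ φ (x (σ k))‖) atTop (𝓝 ‖fderiv ℝ φ z‖) :=
      ((continuous_norm.comp hcontD).tendsto z).comp htend
    have h2 : Tendsto (fun k => ‖fderiv ℝ φ (x (σ k))‖) atTop (𝓝 0) := by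
      refine squeeze_zero (fun k => norm_nonneg _) (fun k => ?_) tendsto_one_div_add_atTop_nhds_zero_nat
      calc ‖fderiv ℝ φ (x (σ k))‖ ≤ 1 / (σ k + 1) := hk (σ k)
        _ ≤ 1 / (k + 1) := by
            have hle : (k:ℝ) ≤ (σ k : ℝ) := by exact_mod_cast hσ.le_apply
            gcongr
    have := tendsto_nhds_unique h1 h2
    exact norm_eq_zero.mp this
  -- pointwise Ekeland inequality
  have hekpt : ∀ {κ : ℝ}, 0 < κ → ∀ (x₀ : X), ∃ z, φ z ≤ φ x₀ ∧
      ∀ y, φ z - κ * dist z y ≤ φ y := by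
    intro κ hκ x₀
    obtain ⟨z, hz1, hz2⟩ := my_ekeland φ hφc.lowerSemicontinuous hφnn hκ x₀
    refine ⟨z, hz1, fun y => ?_⟩
    by_cases hc : φ y + κ * dist z y ≤ φ z
    · have := hz2 y hc
      subst this
      simp
    · push_neg at hc
      linarith
  -- existence
  have hex : ∃ x, f x = 0 := by
    have hek : ∀ k : ℕ, ∃ z, φ z ≤ φ 0 ∧ ‖fderiv ℝ φ z‖ ≤ 1 / (k + 1) := by
      intro k
      have hκ : (0:ℝ) < 1 / (k + 1) := by positivity
      obtain ⟨z, hz1, hz2⟩ := hekpt hκ 0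
      refine ⟨z, hz1, ?_⟩
      rw [hfderivφ z]
      exact norm_fderiv_le_of_ekeland (hDφ z) hκ.le hz2
    choose xs h1 h2 using hek
    obtain ⟨z, σ, hσ, htend, hz⟩ := hPSlim xs
      ⟨φ 0, fun k => by rw [abs_of_nonneg (hφnn _)]; exact h1 k⟩ h2
    exact ⟨z, hz⟩
  -- uniqueness
  suffices huniq : ∀ a b : X, f a = 0 → f b = 0 → a = b by
    obtain ⟨x₀, hx₀⟩ := hex
    exact ⟨x₀, hx₀, fun y hy => huniq y x₀ hy hx₀⟩
  intro a b ha hb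
  by_contra hab
  -- an invertible derivative at a gives a quantitative lower bound on a small sphere
  set A' : X →L[ℝ] H := fderiv ℝ f a with hA'def
  have hAker : A'.ker = ⊥ := LinearMap.ker_eq_bot.mpr (hbij a).1
  have hArange : A'.range = ⊤ := LinearMap.range_eq_top.mpr (hbij a).2
  set A : X ≃L[ℝ] H := ContinuousLinearEquiv.ofBijective A' hAker hArange with hAdef
  have hAcoe0 : (A : X →L[ℝ] H) = A' := ContinuousLinearEquiv.coe_ofBijective _ _ _
  have hAcoe : ∀ h : X, A h = A' h := fun h => by
    rw [← hAcoe0]; rfl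
  have hAsymm : (0:ℝ) < ‖(A.symm : H →L[ℝ] X)‖ := by
    rcases eq_or_lt_of_le (norm_nonneg (A.symm : H →L[ℝ] X)) with h | h
    · exfalso
      have h0 : (A.symm : H →L[ℝ] X) = 0 := by
        rw [← norm_eq_zero]; exact h.symm
      have : b - a = 0 := by
        have := A.symm_apply_apply (b - a)
        rw [show A.symm (A (b-a)) = (A.symm : H →L[ℝ] X) (A (b-a)) from rfl, h0] at this
        simpa using this.symm
      exact hab (sub_eq_zero.mp this).symm
    · exact h
  set c₀ : ℝ := ‖(A.symm : H →L[ℝ] X)‖⁻¹ with hc₀def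
  have hc₀ : 0 < c₀ := inv_pos.mpr hAsymm
  have hAlow : ∀ h : X, c₀ * ‖h‖ ≤ ‖A' h‖ := by
    intro h
    have h1 : ‖h‖ ≤ ‖(A.symm : H →L[ℝ] X)‖ * ‖A' h‖ := by
      calc ‖h‖ = ‖A.symm (A h)‖ := by rw [A.symm_apply_apply]
        _ ≤ ‖(A.symm : H →L[ℝ] X)‖ * ‖A h‖ := (A.symm : H →L[ℝ] X).le_opNorm _
        _ = ‖(A.symm : H →L[ℝ] X)‖ * ‖A' h‖ := by rw [hAcoe]
    rw [hc₀def, inv_mul_le_iff₀ hAsymm]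
    linarith
  -- sphere bound
  have hlo : ∃ ε > 0, ∀ h : X, ‖h‖ < ε → ‖f (a + h) - f a - A' h‖ ≤ c₀/2 * ‖h‖ := by
    have h1 := hasFDerivAt_iff_isLittleO_nhds_zero.mp (hfd a)
    have h2 := h1.def (half_pos hc₀)
    rw [Metric.eventually_nhds_iff] at h2
    obtain ⟨ε, hε, hb2⟩ := h2
    exact ⟨ε, hε, fun h hh => by simpa using hb2 (by simpa [dist_eq_norm] using hh)⟩
  obtain ⟨ε, hε, hsmall⟩ := hlo
  set r₀ : ℝ := min (ε/2) (‖b - a‖/2) with hr₀def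
  have hba : (0:ℝ) < ‖b - a‖ := by
    rw [norm_pos_iff, sub_ne_zero]
    exact fun h => hab h.symm
  have hr₀ : 0 < r₀ := lt_min (by linarith) (by linarith)
  set μ : ℝ := c₀/2 * r₀ with hμdef
  have hμ : 0 < μ := by positivity
  set ρ : ℝ := (1/2 : ℝ) * μ^2 with hρdef
  have hρ : 0 < ρ := by positivity
  have hsph : ∀ x : X, ‖x - a‖ = r₀ → ρ ≤ φ x := by
    intro x hx
    have h1 : ‖x - a‖ < ε := by
      rw [hx]; calc r₀ ≤ ε/2 := min_le_left _ _
        _ < ε := by linarith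
    have h2 := hsmall (x - a) h1
    rw [add_sub_cancel, ha, sub_zero] at h2
    have h3 : c₀ * r₀ ≤ ‖A' (x - a)‖ := by
      have := hAlow (x - a); rwa [hx] at this
    have h4 : μ ≤ ‖f x‖ := by
      have h5 : ‖A' (x - a)‖ - ‖f x - A' (x-a)‖ ≤ ‖f x‖ := by
        have := norm_sub_norm_le (f x - A' (x-a)) (f x)
        have h6 := norm_sub_norm_le (A' (x-a)) (f x)
        have := norm_sub_le ((A' (x-a)) - f x) 0
        calc ‖A' (x - a)‖ - ‖f x - A' (x-a)‖
            ≤ ‖A' (x - a)‖ - ‖A' (x-a) - f x‖ := by rw [norm_sub_rev]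
          _ ≤ ‖f x‖ := by linarith [h6]
      rw [hx] at h2
      rw [hμdef]
      nlinarith
    show ρ ≤ (1/2 : ℝ) * ‖f x‖^2
    rw [hρdef]
    nlinarith
  -- the path space
  set ΓS : Set C(unitInterval, X) := {γ | γ 0 = a ∧ γ 1 = b} with hΓSdef
  have hΓcl : IsClosed ΓS := by
    apply IsClosed.inter
    · exact isClosed_eq (continuous_eval_const 0) continuous_const
    · exact isClosed_eq (continuous_eval_const 1) continuous_const
  haveI : CompleteSpace ΓS := hΓcl.completeSpace_coe
  set ψ : ΓS → ℝ := fun γ => ⨆ t, φ (γ.1 t) with hψdef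
  have hbddγ : ∀ γ : ΓS, BddAbove (Set.range fun t => φ (γ.1 t)) :=
    fun γ => (isCompact_range (hφc.comp γ.1.continuous)).bddAbove
  have hψ_ge : ∀ (γ : ΓS) (t : unitInterval), φ (γ.1 t) ≤ ψ γ :=
    fun γ t => le_ciSup (hbddγ γ) t
  have hψ_le : ∀ (γ : ΓS) (M : ℝ), (∀ t, φ (γ.1 t) ≤ M) → ψ γ ≤ M :=
    fun γ M h => ciSup_le h
  have hψnn : ∀ γ : ΓS, 0 ≤ ψ γ := fun γ => le_trans (hφnn _) (hψ_ge γ 0)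
  have hψlsc : LowerSemicontinuous ψ := by
    intro γ y hy
    obtain ⟨t, ht⟩ := exists_lt_of_lt_ciSup hy
    have hmem : {w : X | y < φ w} ∈ 𝓝 (γ.1 t) :=
      (isOpen_lt continuous_const hφc).mem_nhds ht
    obtain ⟨d, hd, hball⟩ := Metric.mem_nhds_iff.mp hmem
    filter_upwards [Metric.ball_mem_nhds γ hd] with η hη
    have h1 : dist (η.1 t) (γ.1 t) < d := by
      calc dist (η.1 t) (γ.1 t) ≤ dist η.1 γ.1 := ContinuousMap.dist_apply_le_dist t
        _ = dist η γ := (Subtype.dist_eq η γ).symm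
        _ < d := hη
    have h2 : y < φ (η.1 t) := hball h1
    exact lt_of_lt_of_le h2 (hψ_ge η t)
  -- ΓS is nonempty
  have hγlin : (⟨fun s => a + (s : ℝ) • (b - a),
      (continuous_const.add (continuous_subtype_val.smul continuous_const))⟩ : C(unitInterval, X)) ∈ ΓS := by
    constructor <;> simp
  haveI : Nonempty ΓS := ⟨⟨_, hγlin⟩⟩
  set c : ℝ := ⨅ γ : ΓS, ψ γ with hcdef
  have hbddbΓ : BddBelow (Set.range ψ) := ⟨0, by rintro - ⟨γ, rfl⟩; exact hψnn γ⟩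
  have hcρ : ρ ≤ c := by
    refine le_ciInf fun γ => ?_
    have hD : Continuous fun s : unitInterval => ‖γ.1 s - a‖ :=
      (γ.1.continuous.sub continuous_const).norm
    have hr₀mem : r₀ ∈ Set.Icc ‖γ.1 0 - a‖ ‖γ.1 1 - a‖ := by
      rw [γ.2.1, γ.2.2]
      simp only [sub_self, norm_zero]
      constructor
      · exact hr₀.le
      · calc r₀ ≤ ‖b - a‖/2 := min_le_right _ _
          _ ≤ ‖b - a‖ := by linarith
    obtain ⟨s, hs⟩ := intermediate_value_univ (0 : unitInterval) 1 hD hr₀mem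
    exact le_trans (hsph _ hs) (hψ_ge γ s)
  have hcpos : 0 < c := lt_of_lt_of_le hρ hcρ
  -- the mountain-pass claim
  have claim : ∀ δ : ℝ, 0 < δ → δ ≤ c/4 → ∃ x, |φ x - c| ≤ δ ∧ ‖fderiv ℝ φ x‖ ≤ δ := by
    intro δ hδ hδc
    refine mountain_pass_aux φ hφc hφnn (fun x => by rw [hfderivφ]; exact hDφ x) hcontD a b
      (by rw [hφdef]; simp [ha]) (by rw [hφdef]; simp [hb]) c ?_ ?_ δ hδ hδc
    · intro γ hγ0 hγ1
      exact ciInf_le hbddbΓ (⟨γ, hγ0, hγ1⟩ : ΓS)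
    · intro ε hε
      obtain ⟨γ₀, hγ₀⟩ := exists_lt_of_ciInf_lt
        (show (⨅ γ : ΓS, ψ γ) < c + ε by rw [← hcdef]; linarith)
      exact ⟨γ₀.1, γ₀.2.1, γ₀.2.2, hγ₀⟩
  -- conclusion: a Palais-Smale sequence at level c > 0 whose limit is critical
  have hδk : ∀ k : ℕ, 0 < min (c/4) (1/(k+1) : ℝ) := fun k => lt_min (by linarith) (by positivity)
  have hseq : ∀ k : ℕ, ∃ x, |φ x - c| ≤ min (c/4) (1/(k+1) : ℝ) ∧
      ‖fderiv ℝ φ x‖ ≤ min (c/4) (1/(k+1) : ℝ) :=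
    fun k => claim _ (hδk k) (min_le_left _ _)
  choose ys hy1 hy2 using hseq
  obtain ⟨z, σ, hσ, htend, hz⟩ := hPSlim ys
    ⟨c + c/4, fun k => by
      have h1 := abs_le.mp (hy1 k)
      have h2 : min (c/4) (1/(k+1) : ℝ) ≤ c/4 := min_le_left _ _
      rw [abs_of_nonneg (hφnn _)]
      linarith [h1.2]⟩
    (fun k => le_trans (hy2 k) (min_le_right _ _))
  have hφz : φ z = 0 := by rw [hφdef]; simp [hz]
  have hφz2 : c ≤ φ z := by
    have h1 : Tendsto (fun k => φ (ys (σ k))) atTop (𝓝 (φ z)) := (hφc.tendsto z).comp htend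
    have h2 : Tendsto (fun k : ℕ => c - 1/((k:ℝ)+1)) atTop (𝓝 (c - 0)) :=
      tendsto_const_nhds.sub tendsto_one_div_add_atTop_nhds_zero_nat
    rw [sub_zero] at h2
    refine le_of_tendsto_of_tendsto' h2 h1 fun k => ?_
    have h3 := (abs_le.mp (hy1 (σ k))).1
    have h4 : min (c/4) (1/((σ k : ℝ)+1)) ≤ 1/((σ k : ℝ)+1) := min_le_right _ _
    have h5 : 1/((σ k : ℝ)+1) ≤ 1/((k:ℝ)+1) := by
      have hle : (k:ℝ) ≤ (σ k : ℝ) := by exact_mod_cast hσ.le_apply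
      gcongr
    linarith
  linarith


end Aux

/-- **Global implicit function theorem.**
Let `X, U` be real Banach spaces, `H` a real Hilbert space, and `F : X × U → H` a `C¹` map.
Assume that for every `u` the functional `x ↦ ½‖F(x,u)‖²` satisfies the Palais–Smale
condition and that the partial differential `F_x'(x,u) : X → H` is bijective for every
`(x,u)`.  Then there is a unique map `λ : U → X` with `F(λ(u),u) = 0` for all `u`; it is
of class `C¹`, and its differential satisfies
`F_x'(λ(u),u) (λ'(u) v) = − F_u'(λ(u),u) v`, i.e. `λ'(u) = −[F_x'(λ(u),u)]⁻¹ ∘ F_u'(λ(u),u)`. -/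
theorem global_implicit_function_theorem
    {X U H : Type*} [NormedAddCommGroup X] [NormedSpace ℝ X] [CompleteSpace X]
    [NormedAddCommGroup U] [NormedSpace ℝ U] [CompleteSpace U]
    [NormedAddCommGroup H] [InnerProductSpace ℝ H] [CompleteSpace H]
    (F : X × U → H) (hF : ContDiff ℝ 1 F)
    (hPS : ∀ u : U, PalaisSmale fun x : X => (1 / 2 : ℝ) * ‖F (x, u)‖ ^ 2)
    (hbij : ∀ (x : X) (u : U), Function.Bijective (fderiv ℝ (fun x' => F (x', u)) x)) :
    ∃ lam : U → X,
      (∀ u, F (lam u, u) = 0) ∧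
      (∀ lam' : U → X, (∀ u, F (lam' u, u) = 0) → lam' = lam) ∧
      ContDiff ℝ 1 lam ∧
      ∀ u v, (fderiv ℝ (fun x' => F (x', u)) (lam u)) (fderiv ℝ lam u v) =
        -(fderiv ℝ (fun u' => F (lam u, u')) u) v := by
  have key : ∀ u : U, ∃! x : X, F (x, u) = 0 := by
    intro u
    exact exists_unique_zero (fun x => F (x, u))
      (hF.comp (contDiff_id.prodMk contDiff_const)) (hPS u) (fun x => hbij x u)
  choose lam hlam huniq using fun u => key u
  -- main local analysis at each u₀
  have main : ∀ u₀ : U, ContDiffAt ℝ 1 lam u₀ ∧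
      ∀ v, (fderiv ℝ (fun x' => F (x', u₀)) (lam u₀)) (fderiv ℝ lam u₀ v) =
        -(fderiv ℝ (fun u' => F (lam u₀, u')) u₀) v := by
    intro u₀
    set p₀ : X × U := (lam u₀, u₀) with hp₀def
    set Φ : X × U → H × U := fun p => (F p, p.2) with hΦdef
    have hΦ : ContDiff ℝ 1 Φ := hF.prodMk contDiff_snd
    have hΦat : ContDiffAt ℝ 1 Φ p₀ := hΦ.contDiffAt
    set DF : (X × U) →L[ℝ] H := fderiv ℝ F p₀ with hDFdef
    have hDF : HasFDerivAt F DF p₀ := (hF.differentiable one_ne_zero p₀).hasFDerivAt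
    set L : (X × U) →L[ℝ] (H × U) := DF.prod (ContinuousLinearMap.snd ℝ X U) with hLdef
    have hL : HasFDerivAt Φ L p₀ := hDF.prodMk hasFDerivAt_snd
    -- the partial derivatives
    have hAfd : HasFDerivAt (fun x' => F (x', u₀)) (DF.comp (ContinuousLinearMap.inl ℝ X U))
        (lam u₀) := hDF.comp (lam u₀) (hasFDerivAt_prodMk_left (lam u₀) u₀)
    have hBfd : HasFDerivAt (fun u' => F (lam u₀, u')) (DF.comp (ContinuousLinearMap.inr ℝ X U))
        u₀ := hDF.comp u₀ (hasFDerivAt_prodMk_right (lam u₀) u₀)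
    have hAbij : Function.Bijective (DF.comp (ContinuousLinearMap.inl ℝ X U)) := by
      have := hbij (lam u₀) u₀
      rwa [hAfd.fderiv] at this
    have hsplit : ∀ p : X × U, ((p.1, (0:U)) : X × U) + ((0:X), p.2) = p := by
      intro p; ext <;> simp
    have hDFsplit : ∀ p : X × U, DF p = DF (p.1, 0) + DF (0, p.2) := by
      intro p
      conv_lhs => rw [← hsplit p]
      rw [map_add]
    have hLbij : Function.Bijective L := by
      constructor
      · have hker : ∀ p : X × U, L p = 0 → p = 0 := by
          intro p hp
          have h2 : p.2 = 0 := congrArg Prod.snd hp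
          have h1 : DF p = 0 := congrArg Prod.fst hp
          rw [hDFsplit p, h2] at h1
          have h1' : DF (p.1, 0) = 0 := by rw [Prod.mk_zero_zero, map_zero, add_zero] at h1; exact h1
          clear h1
          have h1 := h1'
          have h3 : (DF.comp (ContinuousLinearMap.inl ℝ X U)) p.1 = 0 := by
            simpa using h1
          have h4 : p.1 = 0 := by
            have := hAbij.1 (a₁ := p.1) (a₂ := 0)
            simp only [map_zero] at this
            exact this h3
          exact Prod.ext h4 h2
        intro p q hpq
        have := hker (p - q) (by rw [map_sub, hpq, sub_self])
        exact sub_eq_zero.mp this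
      · rintro ⟨y, k⟩
        obtain ⟨h, hh⟩ := hAbij.2 (y - DF (0, k))
        refine ⟨(h, k), ?_⟩
        have h1 : DF (h, k) = y := by
          rw [hDFsplit (h, k)]
          simp only at hh ⊢
          rw [show DF ((h,k).1, 0) = DF.comp (ContinuousLinearMap.inl ℝ X U) h from rfl] at *
          rw [hh]
          abel
        exact Prod.ext h1 rfl
    set N : (X × U) ≃L[ℝ] (H × U) := ContinuousLinearEquiv.ofBijective L
      (LinearMap.ker_eq_bot.mpr hLbij.1)
      (LinearMap.range_eq_top.mpr hLbij.2) with hNdef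
    have hNcoe : (N : (X × U) →L[ℝ] (H × U)) = L := ContinuousLinearEquiv.coe_ofBijective _ _ _
    have hLN : HasFDerivAt Φ (N : (X × U) →L[ℝ] (H × U)) p₀ := by rw [hNcoe]; exact hL
    have hone : (1 : WithTop ℕ∞) ≠ 0 := one_ne_zero
    set G : H × U → X × U := hΦat.localInverse hLN hone with hGdef
    have hstrict : HasStrictFDerivAt Φ (N : (X × U) →L[ℝ] (H × U)) p₀ :=
      hΦat.hasStrictFDerivAt' hLN hone
    have hΦp₀ : Φ p₀ = ((0:H), u₀) := by
      rw [hΦdef]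
      simp only [hp₀def]
      rw [hlam u₀]
    have hGr : ∀ᶠ y in 𝓝 ((0:H), u₀), Φ (G y) = y := by
      have := hstrict.eventually_right_inverse
      rwa [hΦp₀] at this
    have htend : Tendsto (fun u : U => ((0:H), u)) (𝓝 u₀) (𝓝 ((0:H), u₀)) :=
      (continuous_const.prodMk continuous_id).tendsto u₀
    have hu : ∀ᶠ u in 𝓝 u₀, Φ (G (0, u)) = (0, u) := htend.eventually hGr
    have hlamψ : lam =ᶠ[𝓝 u₀] fun u => (G (0, u)).1 := by
      filter_upwards [hu] with u huu
      have h2 : (G (0, u)).2 = u := congrArg Prod.snd huu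
      have h1 : F (G (0, u)) = 0 := congrArg Prod.fst huu
      have h3 : F ((G (0, u)).1, u) = 0 := by
        have h4 : ((G (0, u)).1, u) = G (0, u) := by
          rw [Prod.ext_iff]
          exact ⟨rfl, h2.symm⟩
        rw [h4]
        exact h1
      exact (huniq u _ h3).symm
    -- smoothness
    have hGc : ContDiffAt ℝ 1 G ((0:H), u₀) := by
      have := hΦat.to_localInverse hLN hone
      rwa [hΦp₀] at this
    have hψc : ContDiffAt ℝ 1 (fun u => (G (0, u)).1) u₀ := by
      have hin : ContDiffAt ℝ 1 (fun u : U => ((0:H), u)) u₀ :=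
        (contDiff_const.prodMk contDiff_id).contDiffAt
      have hcomp : ContDiffAt ℝ 1 (fun u => G (0, u)) u₀ := hGc.comp u₀ hin
      exact (contDiffAt_fst.comp u₀ hcomp : )
    have hlamc : ContDiffAt ℝ 1 lam u₀ := hψc.congr_of_eventuallyEq hlamψ
    refine ⟨hlamc, ?_⟩
    intro v
    -- derivative of the local inverse
    have hGs : HasStrictFDerivAt G ((N.symm : (H × U) →L[ℝ] (X × U))) ((0:H), u₀) := by
      have := hstrict.to_localInverse
      rwa [hΦp₀] at this
    have hin : HasFDerivAt (fun u : U => ((0:H), u)) (ContinuousLinearMap.inr ℝ H U) u₀ :=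
      hasFDerivAt_prodMk_right (0:H) u₀
    have hcompd : HasFDerivAt (fun u => G (0, u))
        ((N.symm : (H × U) →L[ℝ] (X × U)).comp (ContinuousLinearMap.inr ℝ H U)) u₀ :=
      hGs.hasFDerivAt.comp u₀ hin
    have hψd : HasFDerivAt (fun u => (G (0, u)).1)
        ((ContinuousLinearMap.fst ℝ X U).comp
          ((N.symm : (H × U) →L[ℝ] (X × U)).comp (ContinuousLinearMap.inr ℝ H U))) u₀ :=
      hcompd.fst
    have hlamd : HasFDerivAt lam
        ((ContinuousLinearMap.fst ℝ X U).comp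
          ((N.symm : (H × U) →L[ℝ] (X × U)).comp (ContinuousLinearMap.inr ℝ H U))) u₀ :=
      hψd.congr_of_eventuallyEq hlamψ
    rw [hlamd.fderiv, hAfd.fderiv, hBfd.fderiv]
    -- algebra
    set pq : X × U := N.symm ((0:H), v) with hpqdef
    have hN : N pq = ((0:H), v) := N.apply_symm_apply _
    have hNL : L pq = ((0:H), v) := by
      rw [← hNcoe]
      exact hN
    have hDFpq : DF pq = 0 := congrArg Prod.fst hNL
    have hpq2 : pq.2 = v := congrArg Prod.snd hNL
    have h5 : DF (pq.1, 0) + DF (0, v) = 0 := by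
      rw [← hpq2, ← hDFsplit pq]
      exact hDFpq
    show DF ((pq.1 : X), (0:U)) = -(DF ((0:X), v))
    exact eq_neg_of_add_eq_zero_left h5
  refine ⟨lam, hlam, ?_, ?_, ?_⟩
  · intro lam' h'
    funext u
    exact huniq u (lam' u) (h' u)
  · exact contDiff_iff_contDiffAt.mpr fun u₀ => (main u₀).1
  · intro u v
    exact (main u).2 v
end
end

section
/- Let β > 1/2, g ∈ L²((0,π),ℝ) with ‖g‖²_{L²} ≤ C, and let x_g ∈ D((-Δ)^β) be the unique solution of (-Δ)^β x = g. Then for every h with 0 < h < π one has ∫₀^h |x_g(t)|² dt ≤ (2/π) C ζ(4β) h, ∫_{π−h}^π |x_g(t)|² dt ≤ (2/π) C ζ(4β) h, and ∫₀^{π−h} |x_g(t+h) − x_g(t)|² dt ≤ 4 C ζ(4β−1) h; consequently the zero-extension x̃_g of x_g to ℝ satisfies ∫_ℝ |x̃_g(t+h) − x̃_g(t)|² dt ≤ const · |h| for |h| < π, with a constant depending only on C and β. -/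
open MeasureTheory Real Filter Topology

noncomputable section

/-- Lebesgue measure restricted to the interval `(0, π)`. -/
def μπ : Measure ℝ := MeasureTheory.volume.restrict (Set.Ioo 0 Real.pi)

/-- Partial sums of the sine series `∑_{j≥1} a_j √(2/π) sin(j t)` (scalar case; the
coefficient `a j` is attached to `sin ((j+1) t)`). -/
def sinePartialSumR (a : ℕ → ℝ) (N : ℕ) : ℝ → ℝ := fun t =>
  ∑ j ∈ Finset.range N, (Real.sqrt (2 / Real.pi) * Real.sin (((j : ℝ) + 1) * t)) * a j

/-- `x` has the sine expansion with coefficients `a`, in the sense of `L²((0,π),ℝ)`. -/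
def HasSineExpansionR (x : ℝ → ℝ) (a : ℕ → ℝ) : Prop :=
  Tendsto (fun N => eLpNorm (fun t => x t - sinePartialSumR a N t) 2 μπ) atTop (𝓝 0)

/-- The Riemann zeta function (as a real series): `ζ(s) = ∑_{j≥1} j^{-s}`. -/
def zeta' (s : ℝ) : ℝ := ∑' j : ℕ, ((j : ℝ) + 1) ^ (-s)


namespace TransAux

instance : IsFiniteMeasure μπ := by
  constructor
  rw [μπ, Measure.restrict_apply_univ, Real.volume_Ioo]
  exact ENNReal.ofReal_lt_top

lemma integral_cos_eq_zero {c : ℝ} (hc : c ≠ 0) (hs : Real.sin (c * Real.pi) = 0) :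
    ∫ t in (0:ℝ)..Real.pi, Real.cos (c * t) = 0 := by
  rw [intervalIntegral.integral_comp_mul_left Real.cos hc]
  simp [integral_cos, hs]

lemma sin_nat_mul_pi' (k : ℕ) : Real.sin ((k:ℝ) * Real.pi) = 0 := by
  exact_mod_cast Real.sin_int_mul_pi (k : ℤ)

lemma integral_sin_mul_sin (m n : ℕ) :
    (∫ t in (0:ℝ)..Real.pi, Real.sin (((m:ℝ)+1)*t) * Real.sin (((n:ℝ)+1)*t))
      = if m = n then Real.pi / 2 else 0 := by
  have key : ∀ t : ℝ, Real.sin (((m:ℝ)+1)*t) * Real.sin (((n:ℝ)+1)*t)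
      = (Real.cos ((((m:ℝ) - n)) * t) - Real.cos ((((m:ℝ) + n + 2)) * t)) / 2 := by
    intro t
    have h1 : ((((m:ℝ)-n)*t + ((m:ℝ)+n+2)*t))/2 = ((m:ℝ)+1)*t := by ring
    have h2 : ((((m:ℝ)-n)*t - ((m:ℝ)+n+2)*t))/2 = -((((n:ℝ)+1))*t) := by ring
    rw [Real.cos_sub_cos, h1, h2, Real.sin_neg]; ring
  have hi1 : IntervalIntegrable (fun t => Real.cos (((m:ℝ) - n) * t)) volume 0 Real.pi :=
    (Real.continuous_cos.comp (continuous_const.mul continuous_id)).intervalIntegrable _ _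
  have hi2 : IntervalIntegrable (fun t => Real.cos (((m:ℝ) + n + 2) * t)) volume 0 Real.pi :=
    (Real.continuous_cos.comp (continuous_const.mul continuous_id)).intervalIntegrable _ _
  calc (∫ t in (0:ℝ)..Real.pi, Real.sin (((m:ℝ)+1)*t) * Real.sin (((n:ℝ)+1)*t))
      = ∫ t in (0:ℝ)..Real.pi,
          (Real.cos ((((m:ℝ) - n)) * t) - Real.cos ((((m:ℝ) + n + 2)) * t)) / 2 := by
        simp_rw [key]
    _ = ((∫ t in (0:ℝ)..Real.pi, Real.cos ((((m:ℝ) - n)) * t))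
          - ∫ t in (0:ℝ)..Real.pi, Real.cos ((((m:ℝ) + n + 2)) * t)) / 2 := by
        rw [intervalIntegral.integral_div, intervalIntegral.integral_sub hi1 hi2]
    _ = if m = n then Real.pi / 2 else 0 := by
        have hc2 : ((m:ℝ) + n + 2) ≠ 0 := by positivity
        have hs2 : Real.sin (((m:ℝ) + n + 2) * Real.pi) = 0 := by
          have : ((m:ℝ) + n + 2) = ((m + n + 2 : ℕ) : ℝ) := by push_cast; ring
          rw [this, sin_nat_mul_pi']
        rw [integral_cos_eq_zero hc2 hs2]
        by_cases hmn : m = n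
        · subst hmn
          simp only [sub_self, zero_mul, Real.cos_zero, if_pos rfl]
          rw [intervalIntegral.integral_const]
          simp
        · have hc1 : ((m:ℝ) - n) ≠ 0 := by
            simp only [ne_eq, sub_eq_zero, Nat.cast_inj]; exact hmn
          have hs1 : Real.sin (((m:ℝ) - n) * Real.pi) = 0 := by
            have : ((m:ℝ) - n) = (((m:ℤ) - n : ℤ) : ℝ) := by push_cast; ring
            rw [this, Real.sin_int_mul_pi]
          rw [integral_cos_eq_zero hc1 hs1, if_neg hmn]
          norm_num

lemma ortho (m n : ℕ) :
    (∫ t in Set.Ioo (0:ℝ) Real.pi,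
      (Real.sqrt (2/Real.pi) * Real.sin (((m:ℝ)+1)*t)) * (Real.sqrt (2/Real.pi) * Real.sin (((n:ℝ)+1)*t)))
      = if m = n then 1 else 0 := by
  have hπ := Real.pi_pos
  have h0 : (∫ t in Set.Ioo (0:ℝ) Real.pi,
      (Real.sqrt (2/Real.pi) * Real.sin (((m:ℝ)+1)*t)) * (Real.sqrt (2/Real.pi) * Real.sin (((n:ℝ)+1)*t)))
      = 2 / Real.pi * ∫ t in Set.Ioo (0:ℝ) Real.pi, Real.sin (((m:ℝ)+1)*t) * Real.sin (((n:ℝ)+1)*t) := by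
    rw [← integral_const_mul]
    apply setIntegral_congr_fun measurableSet_Ioo
    intro t _
    have : Real.sqrt (2/Real.pi) * Real.sqrt (2/Real.pi) = 2 / Real.pi :=
      Real.mul_self_sqrt (by positivity)
    calc Real.sqrt (2/Real.pi) * Real.sin (((m:ℝ)+1)*t) * (Real.sqrt (2/Real.pi) * Real.sin (((n:ℝ)+1)*t))
        = (Real.sqrt (2/Real.pi) * Real.sqrt (2/Real.pi)) * (Real.sin (((m:ℝ)+1)*t) * Real.sin (((n:ℝ)+1)*t)) := by ring
      _ = 2 / Real.pi * (Real.sin (((m:ℝ)+1)*t) * Real.sin (((n:ℝ)+1)*t)) := by rw [this]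
  have h1 : (∫ t in Set.Ioo (0:ℝ) Real.pi, Real.sin (((m:ℝ)+1)*t) * Real.sin (((n:ℝ)+1)*t))
      = ∫ t in (0:ℝ)..Real.pi, Real.sin (((m:ℝ)+1)*t) * Real.sin (((n:ℝ)+1)*t) := by
    rw [intervalIntegral.integral_of_le hπ.le, integral_Ioc_eq_integral_Ioo]
  rw [h0, h1, integral_sin_mul_sin]
  by_cases hmn : m = n
  · rw [if_pos hmn, if_pos hmn]; field_simp
  · rw [if_neg hmn, if_neg hmn, mul_zero]


lemma cont_e (j : ℕ) : Continuous (fun t : ℝ => Real.sqrt (2 / Real.pi) * Real.sin (((j:ℝ)+1)*t)) := by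
  fun_prop

lemma cont_partial (a : ℕ → ℝ) (N : ℕ) : Continuous (sinePartialSumR a N) := by
  unfold sinePartialSumR
  exact continuous_finset_sum _ fun j _ => (cont_e j).mul continuous_const

lemma integral_partial_sq (a : ℕ → ℝ) (N : ℕ) :
    ∫ t, (sinePartialSumR a N t)^2 ∂μπ = ∑ j ∈ Finset.range N, (a j)^2 := by
  have hterm : ∀ (j k : ℕ), IntegrableOn
      (fun t => ((Real.sqrt (2/Real.pi) * Real.sin (((j:ℝ)+1)*t)) * a j) *
        ((Real.sqrt (2/Real.pi) * Real.sin (((k:ℝ)+1)*t)) * a k)) (Set.Ioo 0 Real.pi) volume := by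
    intro j k
    exact ((((cont_e j).mul continuous_const).mul ((cont_e k).mul
      continuous_const)).integrableOn_Icc).mono_set Set.Ioo_subset_Icc_self
  have hsq : ∀ t, (sinePartialSumR a N t)^2 = ∑ j ∈ Finset.range N, ∑ k ∈ Finset.range N,
      ((Real.sqrt (2/Real.pi) * Real.sin (((j:ℝ)+1)*t)) * a j) *
        ((Real.sqrt (2/Real.pi) * Real.sin (((k:ℝ)+1)*t)) * a k) := by
    intro t
    rw [sq, sinePartialSumR, Finset.sum_mul_sum]
  rw [show (μπ : Measure ℝ) = volume.restrict (Set.Ioo 0 Real.pi) from rfl]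
  simp_rw [hsq]
  rw [integral_finset_sum _ (fun j _ => integrable_finset_sum _ (fun k _ => hterm j k))]
  have hinner : ∀ j ∈ Finset.range N,
      (∫ t in Set.Ioo (0:ℝ) Real.pi, ∑ k ∈ Finset.range N,
        ((Real.sqrt (2/Real.pi) * Real.sin (((j:ℝ)+1)*t)) * a j) *
          ((Real.sqrt (2/Real.pi) * Real.sin (((k:ℝ)+1)*t)) * a k)) = (a j)^2 := by
    intro j hj
    rw [integral_finset_sum _ (fun k _ => hterm j k)]
    have hjk : ∀ k ∈ Finset.range N,
        (∫ t in Set.Ioo (0:ℝ) Real.pi,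
          ((Real.sqrt (2/Real.pi) * Real.sin (((j:ℝ)+1)*t)) * a j) *
            ((Real.sqrt (2/Real.pi) * Real.sin (((k:ℝ)+1)*t)) * a k))
        = (if j = k then (1:ℝ) else 0) * (a j * a k) := by
      intro k _
      have : (fun t => ((Real.sqrt (2/Real.pi) * Real.sin (((j:ℝ)+1)*t)) * a j) *
            ((Real.sqrt (2/Real.pi) * Real.sin (((k:ℝ)+1)*t)) * a k))
          = fun t => ((Real.sqrt (2/Real.pi) * Real.sin (((j:ℝ)+1)*t)) *
            (Real.sqrt (2/Real.pi) * Real.sin (((k:ℝ)+1)*t))) * (a j * a k) := by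
        funext t; ring
      rw [this, integral_mul_const, ortho j k]
    rw [Finset.sum_congr rfl hjk]
    simp only [ite_mul, one_mul, zero_mul]
    rw [Finset.sum_ite_eq (Finset.range N) j (fun k => a j * a k), if_pos hj, ← sq]
  exact Finset.sum_congr rfl hinner

lemma abs_sin_sub_sin_le (p q : ℝ) : |Real.sin p - Real.sin q| ≤ min 2 |p - q| := by
  refine le_min ?_ ?_
  · calc |Real.sin p - Real.sin q| ≤ |Real.sin p| + |Real.sin q| := abs_sub _ _
      _ ≤ 2 := by
        have h1 := Real.abs_sin_le_one p
        have h2 := Real.abs_sin_le_one q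
        linarith
  · rw [Real.sin_sub_sin, abs_mul, abs_mul]
    have h1 : |Real.sin ((p - q)/2)| ≤ |(p - q)/2| := Real.abs_sin_le_abs
    have h2 : |Real.cos ((p + q)/2)| ≤ 1 := Real.abs_cos_le_one _
    have h3 : |(p - q)/2| = |p - q|/2 := by rw [abs_div, abs_two]
    have h4 : |(2:ℝ)| = 2 := abs_two
    have h5 : (0:ℝ) ≤ |Real.sin ((p - q)/2)| := abs_nonneg _
    have h6 : (0:ℝ) ≤ |p - q| := abs_nonneg _
    rw [h4]
    nlinarith

lemma partial_abs_le {a : ℕ → ℝ} (ha : Summable (fun j => |a j|)) (N : ℕ) (t : ℝ) :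
    |sinePartialSumR a N t| ≤ Real.sqrt (2/Real.pi) * ∑' j, |a j| := by
  have hK : (0:ℝ) ≤ Real.sqrt (2/Real.pi) := Real.sqrt_nonneg _
  calc |sinePartialSumR a N t|
      ≤ ∑ j ∈ Finset.range N, |(Real.sqrt (2/Real.pi) * Real.sin (((j:ℝ)+1)*t)) * a j| :=
        Finset.abs_sum_le_sum_abs _ _
    _ ≤ ∑ j ∈ Finset.range N, Real.sqrt (2/Real.pi) * |a j| := by
        apply Finset.sum_le_sum
        intro j _
        rw [abs_mul, abs_mul, abs_of_nonneg hK]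
        calc Real.sqrt (2/Real.pi) * |Real.sin (((j:ℝ)+1)*t)| * |a j|
            ≤ Real.sqrt (2/Real.pi) * 1 * |a j| := by
              gcongr
              exact Real.abs_sin_le_one _
          _ = Real.sqrt (2/Real.pi) * |a j| := by ring
    _ = Real.sqrt (2/Real.pi) * ∑ j ∈ Finset.range N, |a j| := by rw [Finset.mul_sum]
    _ ≤ Real.sqrt (2/Real.pi) * ∑' j, |a j| := by
        apply mul_le_mul_of_nonneg_left _ hK
        exact Summable.sum_le_tsum _ (fun _ _ => abs_nonneg _) ha

lemma partial_diff_abs_le {a : ℕ → ℝ} {h : ℝ} (hh : 0 ≤ h)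
    (hs : Summable (fun j => |a j| * min 2 (((j:ℝ)+1) * h))) (N : ℕ) (t : ℝ) :
    |sinePartialSumR a N (t + h) - sinePartialSumR a N t|
      ≤ Real.sqrt (2/Real.pi) * ∑' j, |a j| * min 2 (((j:ℝ)+1)*h) := by
  have hK : (0:ℝ) ≤ Real.sqrt (2/Real.pi) := Real.sqrt_nonneg _
  have hd : sinePartialSumR a N (t + h) - sinePartialSumR a N t
      = ∑ j ∈ Finset.range N, (Real.sqrt (2/Real.pi) *
          (Real.sin (((j:ℝ)+1)*(t+h)) - Real.sin (((j:ℝ)+1)*t))) * a j := by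
    rw [sinePartialSumR, sinePartialSumR, ← Finset.sum_sub_distrib]
    congr 1; funext j; ring
  rw [hd]
  calc |∑ j ∈ Finset.range N, (Real.sqrt (2/Real.pi) *
          (Real.sin (((j:ℝ)+1)*(t+h)) - Real.sin (((j:ℝ)+1)*t))) * a j|
      ≤ ∑ j ∈ Finset.range N, |(Real.sqrt (2/Real.pi) *
          (Real.sin (((j:ℝ)+1)*(t+h)) - Real.sin (((j:ℝ)+1)*t))) * a j| :=
        Finset.abs_sum_le_sum_abs _ _
    _ ≤ ∑ j ∈ Finset.range N, Real.sqrt (2/Real.pi) * (|a j| * min 2 (((j:ℝ)+1)*h)) := by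
        apply Finset.sum_le_sum
        intro j _
        rw [abs_mul, abs_mul, abs_of_nonneg hK]
        have hsin : |Real.sin (((j:ℝ)+1)*(t+h)) - Real.sin (((j:ℝ)+1)*t)|
            ≤ min 2 (((j:ℝ)+1)*h) := by
          have := abs_sin_sub_sin_le (((j:ℝ)+1)*(t+h)) (((j:ℝ)+1)*t)
          have he : ((j:ℝ)+1)*(t+h) - ((j:ℝ)+1)*t = ((j:ℝ)+1)*h := by ring
          rw [he] at this
          rwa [abs_of_nonneg (by positivity : (0:ℝ) ≤ ((j:ℝ)+1)*h)] at this
        calc Real.sqrt (2/Real.pi) * |Real.sin (((j:ℝ)+1)*(t+h)) - Real.sin (((j:ℝ)+1)*t)| * |a j|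
            ≤ Real.sqrt (2/Real.pi) * (min 2 (((j:ℝ)+1)*h)) * |a j| := by
              gcongr
          _ = Real.sqrt (2/Real.pi) * (|a j| * min 2 (((j:ℝ)+1)*h)) := by ring
    _ = Real.sqrt (2/Real.pi) * ∑ j ∈ Finset.range N, |a j| * min 2 (((j:ℝ)+1)*h) := by
        rw [Finset.mul_sum]
    _ ≤ _ := by
        apply mul_le_mul_of_nonneg_left _ hK
        exact Summable.sum_le_tsum _
          (fun j _ => mul_nonneg (abs_nonneg _) (le_min (by norm_num) (by positivity))) hs


lemma eLpNorm_toReal_sq {f : ℝ → ℝ} (hf : MemLp f 2 μπ) :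
    ((eLpNorm f 2 μπ).toReal)^2 = ∫ t, f t ^ 2 ∂μπ := by
  have hnn : 0 ≤ ∫ t, f t ^ 2 ∂μπ := integral_nonneg (fun t => sq_nonneg _)
  rw [hf.eLpNorm_eq_integral_rpow_norm two_ne_zero ENNReal.ofNat_ne_top]
  have h2 : (2:ENNReal).toReal = 2 := by simp
  rw [h2]
  have hi : (∫ (a : ℝ), ‖f a‖ ^ (2:ℝ) ∂μπ) = ∫ t, f t ^ 2 ∂μπ := by
    apply integral_congr_ae
    filter_upwards with t
    rw [Real.norm_eq_abs, show (2:ℝ) = ((2:ℕ):ℝ) by norm_num, Real.rpow_natCast, sq_abs]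
  rw [hi, ENNReal.toReal_ofReal (Real.rpow_nonneg hnn _)]
  rw [← Real.rpow_natCast ((∫ t, f t ^ 2 ∂μπ) ^ (2:ℝ)⁻¹) 2, ← Real.rpow_mul hnn]
  norm_num

lemma memℒp_partial (a : ℕ → ℝ) (N : ℕ) : MemLp (sinePartialSumR a N) 2 μπ := by
  refine MemLp.of_bound (cont_partial a N).aestronglyMeasurable
    (∑ j ∈ Finset.range N, Real.sqrt (2/Real.pi) * |a j|) ?_
  filter_upwards with t
  rw [Real.norm_eq_abs]
  calc |sinePartialSumR a N t|
      ≤ ∑ j ∈ Finset.range N, |(Real.sqrt (2/Real.pi) * Real.sin (((j:ℝ)+1)*t)) * a j| :=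
        Finset.abs_sum_le_sum_abs _ _
    _ ≤ ∑ j ∈ Finset.range N, Real.sqrt (2/Real.pi) * |a j| := by
        apply Finset.sum_le_sum
        intro j _
        rw [abs_mul, abs_mul, abs_of_nonneg (Real.sqrt_nonneg _)]
        calc Real.sqrt (2/Real.pi) * |Real.sin (((j:ℝ)+1)*t)| * |a j|
            ≤ Real.sqrt (2/Real.pi) * 1 * |a j| := by
              gcongr; exact Real.abs_sin_le_one _
          _ = Real.sqrt (2/Real.pi) * |a j| := by ring

lemma coeff_sq_tendsto {g : ℝ → ℝ} {b : ℕ → ℝ} (hg : MemLp g 2 μπ)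
    (hgb : HasSineExpansionR g b) :
    Tendsto (fun N => ∑ j ∈ Finset.range N, (b j)^2) atTop (𝓝 (∫ t, g t ^ 2 ∂μπ)) := by
  have hPm : ∀ N, MemLp (sinePartialSumR b N) 2 μπ := memℒp_partial b
  have hsub : ∀ N, MemLp (fun t => g t - sinePartialSumR b N t) 2 μπ :=
    fun N => hg.sub (hPm N)
  set dr : ℕ → ℝ := fun N => (eLpNorm (fun t => g t - sinePartialSumR b N t) 2 μπ).toReal
    with hdr
  have hd0 : Tendsto dr atTop (𝓝 0) := by
    have := (ENNReal.tendsto_toReal (ENNReal.zero_ne_top)).comp hgb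
    exact this
  set pN : ℕ → ℝ := fun N => (eLpNorm (sinePartialSumR b N) 2 μπ).toReal with hpN
  set n0 : ℝ := (eLpNorm g 2 μπ).toReal with hn0
  have key : ∀ N, |pN N - n0| ≤ dr N := by
    intro N
    have hfin1 : eLpNorm g 2 μπ ≠ ⊤ := hg.2.ne
    have hfin2 : eLpNorm (sinePartialSumR b N) 2 μπ ≠ ⊤ := (hPm N).2.ne
    have hfin3 : eLpNorm (fun t => g t - sinePartialSumR b N t) 2 μπ ≠ ⊤ := (hsub N).2.ne
    rw [abs_sub_le_iff]
    constructor
    · -- pN ≤ n0 + dr : P = g - (g - P)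
      have h1 : eLpNorm (sinePartialSumR b N) 2 μπ
          ≤ eLpNorm g 2 μπ + eLpNorm (fun t => g t - sinePartialSumR b N t) 2 μπ := by
        have := eLpNorm_sub_le hg.1 (hsub N).1 (by norm_num : (1:ENNReal) ≤ 2)
          (f := g) (g := fun t => g t - sinePartialSumR b N t)
        have he : (g - fun t => g t - sinePartialSumR b N t) = sinePartialSumR b N := by
          funext t; simp
        rwa [he] at this
      have := ENNReal.toReal_mono (by
        exact ENNReal.add_ne_top.2 ⟨hfin1, hfin3⟩) h1
      rw [ENNReal.toReal_add hfin1 hfin3] at this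
      linarith
    · have h1 : eLpNorm g 2 μπ
          ≤ eLpNorm (sinePartialSumR b N) 2 μπ
            + eLpNorm (fun t => g t - sinePartialSumR b N t) 2 μπ := by
        have := eLpNorm_add_le (hPm N).1 (hsub N).1 (by norm_num : (1:ENNReal) ≤ 2)
          (f := sinePartialSumR b N) (g := fun t => g t - sinePartialSumR b N t)
        have he : (sinePartialSumR b N + fun t => g t - sinePartialSumR b N t) = g := by
          funext t; simp
        rwa [he] at this
      have := ENNReal.toReal_mono (ENNReal.add_ne_top.2 ⟨hfin2, hfin3⟩) h1
      rw [ENNReal.toReal_add hfin2 hfin3] at this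
      linarith
  have hpn : Tendsto pN atTop (𝓝 n0) := by
    have h1 : Tendsto (fun N => pN N - n0) atTop (𝓝 0) :=
      squeeze_zero_norm (fun N => by simpa [Real.norm_eq_abs] using key N) hd0
    have := h1.add (tendsto_const_nhds (x := n0))
    simpa using this
  have hsq : Tendsto (fun N => (pN N)^2) atTop (𝓝 (n0^2)) := hpn.pow 2
  have hval : ∀ N, (pN N)^2 = ∑ j ∈ Finset.range N, (b j)^2 := by
    intro N
    rw [hpN]
    rw [eLpNorm_toReal_sq (hPm N), integral_partial_sq]
  have hn0sq : n0^2 = ∫ t, g t ^ 2 ∂μπ := eLpNorm_toReal_sq hg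
  rw [← hn0sq]
  exact hsq.congr hval

lemma bessel {g : ℝ → ℝ} {b : ℕ → ℝ} (hg : MemLp g 2 μπ) (hgb : HasSineExpansionR g b) :
    Summable (fun j => (b j)^2) ∧ ∑' j, (b j)^2 = ∫ t, g t ^ 2 ∂μπ := by
  have ht := coeff_sq_tendsto hg hgb
  have hmono : Monotone (fun N => ∑ j ∈ Finset.range N, (b j)^2) := by
    intro N M hNM
    exact Finset.sum_le_sum_of_subset_of_nonneg (Finset.range_subset_range.2 hNM)
      (fun _ _ _ => sq_nonneg _)
  have hle : ∀ N, ∑ j ∈ Finset.range N, (b j)^2 ≤ ∫ t, g t ^ 2 ∂μπ :=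
    fun N => hmono.ge_of_tendsto ht N
  have hsum : Summable (fun j => (b j)^2) :=
    summable_of_sum_range_le (fun j => sq_nonneg _) hle
  refine ⟨hsum, ?_⟩
  exact tendsto_nhds_unique hsum.hasSum.tendsto_sum_nat ht

lemma summable_rpow_shift {s : ℝ} (hs : 1 < s) :
    Summable (fun j : ℕ => ((j:ℝ)+1) ^ (-s)) := by
  have h1 : Summable (fun n : ℕ => ((n : ℝ) ^ s)⁻¹) := Real.summable_nat_rpow_inv.2 hs
  have h2 := (summable_nat_add_iff 1).2 h1
  refine h2.congr fun j => ?_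
  rw [Real.rpow_neg (by positivity)]
  push_cast
  norm_num

lemma cs {u v : ℕ → ℝ} (hu : ∀ j, 0 ≤ u j) (hv : ∀ j, 0 ≤ v j)
    (hu2 : Summable (fun j => (u j)^2)) (hv2 : Summable (fun j => (v j)^2)) :
    Summable (fun j => u j * v j) ∧
      (∑' j, u j * v j)^2 ≤ (∑' j, (u j)^2) * (∑' j, (v j)^2) := by
  set U := ∑' j, (u j)^2 with hU
  set V := ∑' j, (v j)^2 with hV
  have hU0 : 0 ≤ U := tsum_nonneg fun j => sq_nonneg _
  have hV0 : 0 ≤ V := tsum_nonneg fun j => sq_nonneg _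
  have hbd : ∀ N : ℕ, ∑ j ∈ Finset.range N, u j * v j ≤ Real.sqrt (U*V) := by
    intro N
    have h1 := Finset.sum_mul_sq_le_sq_mul_sq (Finset.range N) u v
    have h2 : ∑ j ∈ Finset.range N, (u j)^2 ≤ U :=
      Summable.sum_le_tsum _ (fun _ _ => sq_nonneg _) hu2
    have h3 : ∑ j ∈ Finset.range N, (v j)^2 ≤ V :=
      Summable.sum_le_tsum _ (fun _ _ => sq_nonneg _) hv2
    have h4 : (∑ j ∈ Finset.range N, u j * v j)^2 ≤ U*V := by
      refine h1.trans ?_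
      have hs2 : (0:ℝ) ≤ ∑ j ∈ Finset.range N, (v j)^2 :=
        Finset.sum_nonneg (fun _ _ => sq_nonneg _)
      exact mul_le_mul h2 h3 hs2 hU0
    have h5 : 0 ≤ ∑ j ∈ Finset.range N, u j * v j :=
      Finset.sum_nonneg (fun j _ => mul_nonneg (hu j) (hv j))
    calc ∑ j ∈ Finset.range N, u j * v j
        = Real.sqrt ((∑ j ∈ Finset.range N, u j * v j)^2) := (Real.sqrt_sq h5).symm
      _ ≤ Real.sqrt (U*V) := Real.sqrt_le_sqrt h4
  have hsum : Summable (fun j => u j * v j) :=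
    summable_of_sum_range_le (fun j => mul_nonneg (hu j) (hv j)) hbd
  refine ⟨hsum, ?_⟩
  have h6 : ∑' j, u j * v j ≤ Real.sqrt (U*V) := Summable.tsum_le_of_sum_range_le hsum hbd
  calc (∑' j, u j * v j)^2 ≤ (Real.sqrt (U*V))^2 := by
        have h7 : 0 ≤ ∑' j, u j * v j := tsum_nonneg (fun j => mul_nonneg (hu j) (hv j))
        exact pow_le_pow_left₀ h7 h6 2
    _ = U*V := Real.sq_sqrt (mul_nonneg hU0 hV0)


lemma setIntegral_translate (f : ℝ → ℝ) (c A B : ℝ) :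
    (∫ t in Set.Ioo A B, f (t + c)) = ∫ t in Set.Ioo (A + c) (B + c), f t := by
  rw [← integral_indicator measurableSet_Ioo, ← integral_indicator measurableSet_Ioo]
  rw [← integral_add_right_eq_self (μ := volume)
    (fun t => (Set.Ioo (A+c) (B+c)).indicator f t) c]
  congr 1
  funext t
  by_cases ht : t ∈ Set.Ioo A B
  · have ht' : t + c ∈ Set.Ioo (A+c) (B+c) := ⟨by linarith [ht.1], by linarith [ht.2]⟩
    rw [Set.indicator_apply, Set.indicator_apply, if_pos ht, if_pos ht']
  · have ht' : t + c ∉ Set.Ioo (A+c) (B+c) :=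
      fun hmem => ht ⟨by linarith [hmem.1], by linarith [hmem.2]⟩
    rw [Set.indicator_apply, Set.indicator_apply, if_neg ht, if_neg ht']

end TransAux


set_option maxHeartbeats 1000000 in
/-- **Translation estimates for solutions of `(-Δ)^β x = g`.**
Let `β > 1/2`, `g ∈ L²((0,π),ℝ)` with `‖g‖²_{L²} ≤ C` and sine coefficients `b`, and let
`x = x_g` be the solution of `(-Δ)^β x = g`, i.e. the function with sine coefficients
`j^{-2β} b_j`.  Then for `0 < h < π`:
`∫₀^h x² ≤ (2/π) C ζ(4β) h`, `∫_{π−h}^π x² ≤ (2/π) C ζ(4β) h`, and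
`∫₀^{π−h} (x(t+h) − x(t))² dt ≤ 4 C ζ(4β−1) h`; consequently the extension of `x` by zero
satisfies `∫_ℝ (x̃(t+h) − x̃(t))² dt ≤ const |h|` for `|h| < π`, with a constant depending
only on `C` and `β`. -/
theorem translation_estimates (β : ℝ) (hβ : β > 1 / 2) (C : ℝ)
    (g x : ℝ → ℝ) (b : ℕ → ℝ)
    (hg : MemLp g 2 μπ) (hgb : HasSineExpansionR g b)
    (hC : (∫ t in Set.Ioo 0 Real.pi, g t ^ 2) ≤ C)
    (hx : MemLp x 2 μπ)
    (hxb : HasSineExpansionR x fun j => ((j : ℝ) + 1) ^ (-(2 * β)) * b j) :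
    (∀ h : ℝ, 0 < h → h < Real.pi →
      (∫ t in Set.Ioo 0 h, x t ^ 2) ≤ 2 / Real.pi * C * zeta' (4 * β) * h ∧
      (∫ t in Set.Ioo (Real.pi - h) Real.pi, x t ^ 2) ≤ 2 / Real.pi * C * zeta' (4 * β) * h ∧
      (∫ t in Set.Ioo 0 (Real.pi - h), (x (t + h) - x t) ^ 2) ≤
        4 * C * zeta' (4 * β - 1) * h) ∧
    (∀ h : ℝ, |h| < Real.pi →
      (∫ t : ℝ, ((if t + h ∈ Set.Ioo 0 Real.pi then x (t + h) else 0) -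
          (if t ∈ Set.Ioo 0 Real.pi then x t else 0)) ^ 2) ≤
        (4 / Real.pi * C * zeta' (4 * β) + 4 * C * zeta' (4 * β - 1)) * |h|) := by
  classical
  have hπ : (0:ℝ) < Real.pi := Real.pi_pos
  set K : ℝ := Real.sqrt (2 / Real.pi) with hKdef
  have hK0 : (0:ℝ) ≤ K := Real.sqrt_nonneg _
  have hKsq : K^2 = 2 / Real.pi := Real.sq_sqrt (by positivity)
  set a : ℕ → ℝ := fun j => ((j : ℝ) + 1) ^ (-(2 * β)) * b j with hadef
  obtain ⟨hbsum, hbeq⟩ := TransAux.bessel hg hgb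
  have hSle : ∑' j, (b j)^2 ≤ C := by
    rw [hbeq]; exact hC
  have hC0 : (0:ℝ) ≤ C := le_trans (tsum_nonneg (fun j => sq_nonneg (b j))) hSle
  have h4β : (1:ℝ) < 4*β := by linarith
  have h4β1 : (1:ℝ) < 4*β - 1 := by linarith
  have hZsum : Summable (fun j : ℕ => ((j:ℝ)+1)^(-(4*β))) := TransAux.summable_rpow_shift h4β
  have hZ'sum : Summable (fun j : ℕ => ((j:ℝ)+1)^(-(4*β-1))) := TransAux.summable_rpow_shift h4β1
  have hZ0 : (0:ℝ) ≤ zeta' (4*β) := tsum_nonneg (fun j => Real.rpow_nonneg (by positivity) _)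
  have hZ'0 : (0:ℝ) ≤ zeta' (4*β-1) := tsum_nonneg (fun j => Real.rpow_nonneg (by positivity) _)
  set u : ℕ → ℝ := fun j => ((j:ℝ)+1)^(-(2*β)) with hudef
  have hu0 : ∀ j, (0:ℝ) < u j := fun j => Real.rpow_pos_of_pos (by positivity) _
  have hau : ∀ j, |a j| = u j * |b j| := fun j => by
    rw [hadef]; dsimp only; rw [abs_mul, abs_of_pos (hu0 j)]
  have huu : ∀ j, (u j)^2 = ((j:ℝ)+1)^(-(4*β)) := fun j => by
    rw [sq, hudef]; dsimp only; rw [← Real.rpow_add (by positivity)]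
    congr 1; ring
  have hb2 : Summable (fun j => |b j|^2) := hbsum.congr (fun j => (sq_abs (b j)).symm)
  have hu2 : Summable (fun j => (u j)^2) := hZsum.congr (fun j => (huu j).symm)
  obtain ⟨hsum_uv, hcs⟩ := TransAux.cs (fun j => (hu0 j).le) (fun j => abs_nonneg (b j)) hu2 hb2
  have hAsum : Summable (fun j => |a j|) := hsum_uv.congr (fun j => (hau j).symm)
  set A : ℝ := ∑' j, |a j| with hAdef
  have hA0 : (0:ℝ) ≤ A := tsum_nonneg (fun j => abs_nonneg _)
  have hAsq : A^2 ≤ zeta' (4*β) * C := by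
    have hAe : A = ∑' j, u j * |b j| := tsum_congr hau
    rw [hAe]
    refine hcs.trans ?_
    have e1 : (∑' j, (u j)^2) = zeta' (4*β) := tsum_congr huu
    have e2 : (∑' j, |b j|^2) = ∑' j, (b j)^2 := tsum_congr (fun j => sq_abs _)
    rw [e1, e2]
    exact mul_le_mul_of_nonneg_left hSle hZ0
  have hM2 : (K*A)^2 ≤ 2/Real.pi * (zeta' (4*β) * C) := by
    rw [mul_pow, hKsq]
    exact mul_le_mul_of_nonneg_left hAsq (by positivity)
  -- a.e. convergence of a subsequence
  have hme : TendstoInMeasure μπ (fun N => sinePartialSumR a N) atTop x := by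
    refine tendstoInMeasure_of_tendsto_eLpNorm_of_ne_top two_ne_zero ENNReal.ofNat_ne_top
      (fun N => (TransAux.cont_partial a N).aestronglyMeasurable) hx.1 ?_
    have he : ∀ N, eLpNorm ((fun N => sinePartialSumR a N) N - x) 2 μπ
        = eLpNorm (fun t => x t - sinePartialSumR a N t) 2 μπ := by
      intro N
      rw [← eLpNorm_neg]
      congr 1
      funext t
      simp
    exact Filter.Tendsto.congr (fun N => (he N).symm) hxb
  obtain ⟨ns, -, hae⟩ := hme.exists_seq_tendsto_ae
  have hΦ : ∀ᵐ t ∂(volume : Measure ℝ), t ∈ Set.Ioo 0 Real.pi →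
      Tendsto (fun i => sinePartialSumR a (ns i) t) atTop (𝓝 (x t)) :=
    ae_imp_of_ae_restrict hae
  set xt : ℝ → ℝ := (Set.Ioo 0 Real.pi).indicator x with hxtdef
  have hxt_aesm : AEStronglyMeasurable xt volume :=
    (aestronglyMeasurable_indicator_iff measurableSet_Ioo).2 hx.1
  have hbd_xt : ∀ᵐ t ∂(volume : Measure ℝ), |xt t| ≤ K * A := by
    filter_upwards [hΦ] with t ht
    by_cases hmem : t ∈ Set.Ioo 0 Real.pi
    · rw [hxtdef]
      rw [Set.indicator_of_mem hmem]
      refine le_of_tendsto (ht hmem).abs (Eventually.of_forall fun i => ?_)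
      exact TransAux.partial_abs_le hAsum (ns i) t
    · rw [hxtdef, Set.indicator_of_notMem hmem, abs_zero]
      positivity
  -- integrability of xt^2
  have hxt2_aesm : AEStronglyMeasurable (fun t => xt t ^ 2) volume := by
    have := hxt_aesm.mul hxt_aesm
    refine this.congr ?_
    filter_upwards with t
    rw [Pi.mul_apply, ← pow_two]
  have hxt2_int : ∀ s : Set ℝ, MeasurableSet s → volume s < ⊤ →
      IntegrableOn (fun t => xt t ^ 2) s volume := by
    intro s hms hvs
    refine Integrable.mono' (g := fun _ => (K*A)^2)
      (integrableOn_const hvs.ne) (hxt2_aesm.restrict) ?_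
    refine ae_restrict_of_ae ?_
    filter_upwards [hbd_xt] with t ht
    rw [Real.norm_eq_abs, abs_of_nonneg (sq_nonneg _), ← sq_abs]
    exact pow_le_pow_left₀ (abs_nonneg _) ht 2
  have part12 : ∀ s : Set ℝ, MeasurableSet s → s ⊆ Set.Ioo 0 Real.pi →
      ∀ ℓ : ℝ, 0 ≤ ℓ → volume s = ENNReal.ofReal ℓ →
      (∫ t in s, x t ^ 2) ≤ 2 / Real.pi * C * zeta' (4 * β) * ℓ := by
    intro s hms hsub ℓ hℓ hvol
    have hfin : volume s < ⊤ := by rw [hvol]; exact ENNReal.ofReal_lt_top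
    have h1 : (∫ t in s, x t ^ 2) = ∫ t in s, xt t ^ 2 :=
      setIntegral_congr_fun hms (fun t ht => by
        rw [hxtdef]; rw [Set.indicator_of_mem (hsub ht)])
    rw [h1]
    have h2 : (∫ t in s, xt t ^ 2) ≤ ∫ t in s, (K*A)^2 := by
      refine integral_mono_ae (hxt2_int s hms hfin) (integrableOn_const hfin.ne) ?_
      refine ae_restrict_of_ae ?_
      filter_upwards [hbd_xt] with t ht
      calc xt t ^ 2 = |xt t|^2 := (sq_abs _).symm
        _ ≤ (K*A)^2 := pow_le_pow_left₀ (abs_nonneg _) ht 2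
    refine h2.trans ?_
    rw [setIntegral_const, measureReal_def, hvol, ENNReal.toReal_ofReal hℓ, smul_eq_mul]
    calc ℓ * (K*A)^2 ≤ ℓ * (2/Real.pi * (zeta' (4*β) * C)) :=
          mul_le_mul_of_nonneg_left hM2 hℓ
      _ = 2/Real.pi * C * zeta' (4*β) * ℓ := by ring
  -- shift machinery
  have hQMP : ∀ h : ℝ, Measure.QuasiMeasurePreserving (fun t : ℝ => t + h) volume volume :=
    fun h => (measurePreserving_add_right volume h).quasiMeasurePreserving
  have hxt_shift_aesm : ∀ h : ℝ, AEStronglyMeasurable (fun t => xt (t+h)) volume :=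
    fun h => hxt_aesm.comp_quasiMeasurePreserving (hQMP h)
  have hbd_xt_shift : ∀ h : ℝ, ∀ᵐ t ∂(volume : Measure ℝ), |xt (t+h)| ≤ K * A :=
    fun h => (hQMP h).ae hbd_xt
  have hG_aesm : ∀ h : ℝ, AEStronglyMeasurable (fun t => (xt (t+h) - xt t)^2) volume := by
    intro h
    have h1 := (hxt_shift_aesm h).sub hxt_aesm
    refine (h1.mul h1).congr ?_
    filter_upwards with t
    rw [Pi.mul_apply, Pi.sub_apply, ← sq]
  have hG_bd : ∀ h : ℝ, ∀ᵐ t ∂(volume : Measure ℝ), ‖(xt (t+h) - xt t)^2‖ ≤ (2*(K*A))^2 := by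
    intro h
    filter_upwards [hbd_xt, hbd_xt_shift h] with t h1 h2
    rw [Real.norm_eq_abs, abs_of_nonneg (sq_nonneg _), ← sq_abs]
    have hle : |xt (t+h) - xt t| ≤ 2*(K*A) := by
      calc |xt (t+h) - xt t| ≤ |xt (t+h)| + |xt t| := abs_sub _ _
        _ ≤ 2*(K*A) := by linarith
    exact pow_le_pow_left₀ (abs_nonneg _) hle 2
  have hG_int : ∀ h : ℝ, ∀ s : Set ℝ, MeasurableSet s → volume s < ⊤ →
      IntegrableOn (fun t => (xt (t+h) - xt t)^2) s volume := by
    intro h s hms hvs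
    refine Integrable.mono' (g := fun _ => (2*(K*A))^2)
      (integrableOn_const hvs.ne) ((hG_aesm h).restrict) ?_
    exact ae_restrict_of_ae (hG_bd h)
  -- part 3 core
  have part3 : ∀ h : ℝ, 0 < h → h < Real.pi →
      (∫ t in Set.Ioo 0 (Real.pi - h), (xt (t+h) - xt t)^2) ≤ 4 * C * zeta' (4*β-1) * h := by
    intro h hh0 hhπ
    have hw0 : ∀ j : ℕ, (0:ℝ) ≤ min 2 (((j:ℝ)+1)*h) :=
      fun j => le_min (by norm_num) (by positivity)
    have hw2 : ∀ j : ℕ, (min 2 (((j:ℝ)+1)*h))^2 ≤ 2*(((j:ℝ)+1)*h) := by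
      intro j
      rcases le_total (((j:ℝ)+1)*h) 2 with hy | hy
      · rw [min_eq_right hy]
        nlinarith [mul_nonneg (by positivity : (0:ℝ) ≤ (j:ℝ)+1) hh0.le]
      · rw [min_eq_left hy]
        nlinarith
    have huw2 : ∀ j : ℕ, (u j * min 2 (((j:ℝ)+1)*h))^2 ≤ 2*h*(((j:ℝ)+1)^(-(4*β-1))) := by
      intro j
      have h1 : (u j * min 2 (((j:ℝ)+1)*h))^2 = (u j)^2 * (min 2 (((j:ℝ)+1)*h))^2 := by ring
      rw [h1, huu j]
      calc ((j:ℝ)+1)^(-(4*β)) * (min 2 (((j:ℝ)+1)*h))^2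
          ≤ ((j:ℝ)+1)^(-(4*β)) * (2*(((j:ℝ)+1)*h)) :=
            mul_le_mul_of_nonneg_left (hw2 j) (Real.rpow_nonneg (by positivity) _)
        _ = 2*h*(((j:ℝ)+1)^(-(4*β)) * ((j:ℝ)+1)) := by ring
        _ = 2*h*(((j:ℝ)+1)^(-(4*β-1))) := by
            congr 1
            have he : -(4*β-1) = -(4*β) + 1 := by ring
            rw [he, Real.rpow_add_one (by positivity : (0:ℝ) < (j:ℝ)+1).ne']
    have hsum2h : Summable (fun j : ℕ => 2*h*(((j:ℝ)+1)^(-(4*β-1)))) := hZ'sum.mul_left (2*h)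
    have huw2sum : Summable (fun j : ℕ => (u j * min 2 (((j:ℝ)+1)*h))^2) :=
      Summable.of_nonneg_of_le (fun j => sq_nonneg _) huw2 hsum2h
    obtain ⟨hBsum', hBcs⟩ := TransAux.cs
      (fun j => mul_nonneg (hu0 j).le (hw0 j)) (fun j => abs_nonneg (b j)) huw2sum hb2
    have haw : ∀ j : ℕ, |a j| * min 2 (((j:ℝ)+1)*h) = (u j * min 2 (((j:ℝ)+1)*h)) * |b j| :=
      fun j => by rw [hau j]; ring
    have hBsum : Summable (fun j : ℕ => |a j| * min 2 (((j:ℝ)+1)*h)) :=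
      hBsum'.congr (fun j => (haw j).symm)
    have hB0 : (0:ℝ) ≤ ∑' j, |a j| * min 2 (((j:ℝ)+1)*h) :=
      tsum_nonneg (fun j => mul_nonneg (abs_nonneg _) (hw0 j))
    have hBsq : (∑' j, |a j| * min 2 (((j:ℝ)+1)*h))^2 ≤ 2*h*zeta' (4*β-1) * C := by
      have hBe : (∑' j, |a j| * min 2 (((j:ℝ)+1)*h))
          = ∑' j, (u j * min 2 (((j:ℝ)+1)*h)) * |b j| := tsum_congr haw
      rw [hBe]
      refine hBcs.trans ?_
      have e1 : (∑' j, (u j * min 2 (((j:ℝ)+1)*h))^2) ≤ 2*h*zeta' (4*β-1) := by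
        refine (Summable.tsum_le_tsum huw2 huw2sum hsum2h).trans ?_
        rw [tsum_mul_left, zeta']
      have e2 : (∑' j, |b j|^2) = ∑' j, (b j)^2 := tsum_congr (fun j => sq_abs _)
      have e3 : (∑' j, |b j|^2) ≤ C := by rw [e2]; exact hSle
      have e4 : (0:ℝ) ≤ ∑' j, |b j|^2 := tsum_nonneg (fun j => sq_nonneg _)
      have e5 : (0:ℝ) ≤ 2*h*zeta' (4*β-1) := by positivity
      exact mul_le_mul e1 e3 e4 e5
    have hD2 : (K * ∑' j, |a j| * min 2 (((j:ℝ)+1)*h))^2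
        ≤ 2/Real.pi * (2*h*zeta' (4*β-1) * C) := by
      rw [mul_pow, hKsq]
      exact mul_le_mul_of_nonneg_left hBsq (by positivity)
    have hΦh := (hQMP h).ae hΦ
    have hdiff_ae : ∀ᵐ t ∂(volume : Measure ℝ), t ∈ Set.Ioo 0 (Real.pi - h) →
        (xt (t+h) - xt t)^2 ≤ (K * ∑' j, |a j| * min 2 (((j:ℝ)+1)*h))^2 := by
      filter_upwards [hΦ, hΦh] with t h1 h2 hmem
      have hm1 : t ∈ Set.Ioo 0 Real.pi := ⟨hmem.1, by linarith [hmem.2]⟩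
      have hm2 : t + h ∈ Set.Ioo 0 Real.pi := ⟨by linarith [hmem.1], by linarith [hmem.2]⟩
      rw [hxtdef]
      rw [Set.indicator_of_mem hm1, Set.indicator_of_mem hm2]
      have hlim : Tendsto (fun i => sinePartialSumR a (ns i) (t+h) - sinePartialSumR a (ns i) t)
          atTop (𝓝 (x (t+h) - x t)) := (h2 hm2).sub (h1 hm1)
      have hd : |x (t+h) - x t| ≤ K * ∑' j, |a j| * min 2 (((j:ℝ)+1)*h) :=
        le_of_tendsto hlim.abs (Eventually.of_forall fun i =>
          TransAux.partial_diff_abs_le hh0.le hBsum (ns i) t)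
      calc (x (t+h) - x t)^2 = |x (t+h) - x t|^2 := (sq_abs _).symm
        _ ≤ _ := pow_le_pow_left₀ (abs_nonneg _) hd 2
    have hvol : volume (Set.Ioo 0 (Real.pi - h)) < ⊤ := by
      rw [Real.volume_Ioo]; exact ENNReal.ofReal_lt_top
    have hle : (∫ t in Set.Ioo 0 (Real.pi - h), (xt (t+h) - xt t)^2)
        ≤ ∫ _t in Set.Ioo 0 (Real.pi - h), (K * ∑' j, |a j| * min 2 (((j:ℝ)+1)*h))^2 := by
      refine integral_mono_ae (hG_int h _ measurableSet_Ioo hvol)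
        (integrableOn_const hvol.ne) ?_
      have hr1 : ∀ᵐ t ∂(volume.restrict (Set.Ioo 0 (Real.pi - h))),
          (t ∈ Set.Ioo 0 (Real.pi - h) →
            (xt (t+h) - xt t)^2 ≤ (K * ∑' j, |a j| * min 2 (((j:ℝ)+1)*h))^2) :=
        ae_restrict_of_ae hdiff_ae
      have hr2 : ∀ᵐ t ∂(volume.restrict (Set.Ioo 0 (Real.pi - h))),
          t ∈ Set.Ioo 0 (Real.pi - h) := ae_restrict_mem measurableSet_Ioo
      filter_upwards [hr1, hr2] with t ht hmem using ht hmem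
    refine hle.trans ?_
    rw [setIntegral_const, measureReal_def, Real.volume_Ioo, ENNReal.toReal_ofReal (by linarith), smul_eq_mul,
      sub_zero]
    calc (Real.pi - h) * (K * ∑' j, |a j| * min 2 (((j:ℝ)+1)*h))^2
        ≤ Real.pi * (K * ∑' j, |a j| * min 2 (((j:ℝ)+1)*h))^2 :=
          mul_le_mul_of_nonneg_right (by linarith) (sq_nonneg _)
      _ ≤ Real.pi * (2/Real.pi * (2*h*zeta' (4*β-1) * C)) :=
          mul_le_mul_of_nonneg_left hD2 hπ.le
      _ = 4 * C * zeta' (4*β-1) * h := by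
          field_simp
          ring
  -- the three key estimates
  have key3 : ∀ h : ℝ, 0 < h → h < Real.pi →
      ((∫ t in Set.Ioo 0 h, x t ^ 2) ≤ 2 / Real.pi * C * zeta' (4 * β) * h ∧
       (∫ t in Set.Ioo (Real.pi - h) Real.pi, x t ^ 2) ≤ 2 / Real.pi * C * zeta' (4 * β) * h ∧
       (∫ t in Set.Ioo 0 (Real.pi - h), (x (t + h) - x t) ^ 2) ≤ 4 * C * zeta' (4 * β - 1) * h) := by
    intro h hh0 hhπ
    refine ⟨?_, ?_, ?_⟩
    · refine part12 _ measurableSet_Ioo (fun t ht => ⟨ht.1, ht.2.trans hhπ⟩) h hh0.le ?_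
      rw [Real.volume_Ioo, sub_zero]
    · refine part12 _ measurableSet_Ioo (fun t ht => ⟨by linarith [ht.1], ht.2⟩) h hh0.le ?_
      rw [Real.volume_Ioo]
      congr 1
      ring
    · have hcongr : (∫ t in Set.Ioo 0 (Real.pi - h), (x (t + h) - x t) ^ 2)
          = ∫ t in Set.Ioo 0 (Real.pi - h), (xt (t+h) - xt t)^2 :=
        setIntegral_congr_fun measurableSet_Ioo (fun t hmem => by
          have hm1 : t ∈ Set.Ioo 0 Real.pi := ⟨hmem.1, by linarith [hmem.2]⟩
          have hm2 : t + h ∈ Set.Ioo 0 Real.pi := ⟨by linarith [hmem.1], by linarith [hmem.2]⟩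
          rw [hxtdef]
          rw [Set.indicator_of_mem hm1, Set.indicator_of_mem hm2])
      rw [hcongr]
      exact part3 h hh0 hhπ
  refine ⟨key3, ?_⟩
  -- part 4
  intro h habs
  have hident : (fun t : ℝ => ((if t + h ∈ Set.Ioo 0 Real.pi then x (t + h) else 0) -
        (if t ∈ Set.Ioo 0 Real.pi then x t else 0)) ^ 2)
      = fun t => (xt (t+h) - xt t)^2 := by
    funext t
    rw [hxtdef]
    by_cases h1 : t + h ∈ Set.Ioo 0 Real.pi <;> by_cases h2 : t ∈ Set.Ioo 0 Real.pi <;>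
      simp [Set.indicator_apply, h1, h2]
  rw [hident]
  have main : ∀ h' : ℝ, 0 < h' → h' < Real.pi →
      (∫ t : ℝ, (xt (t+h') - xt t)^2)
        ≤ (4/Real.pi * C * zeta' (4*β) + 4 * C * zeta' (4*β-1)) * h' := by
    intro h' h0' hπ'
    obtain ⟨k1, k2, -⟩ := key3 h' h0' hπ'
    have k3 := part3 h' h0' hπ'
    have k1' : (∫ t in Set.Ioo 0 h', xt t ^ 2) ≤ 2/Real.pi * C * zeta' (4*β) * h' := by
      have he : (∫ t in Set.Ioo 0 h', xt t ^ 2) = ∫ t in Set.Ioo 0 h', x t ^ 2 :=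
        setIntegral_congr_fun measurableSet_Ioo (fun t ht => by
          have hm : t ∈ Set.Ioo 0 Real.pi := ⟨ht.1, ht.2.trans hπ'⟩
          rw [hxtdef, Set.indicator_of_mem hm])
      rw [he]; exact k1
    have k2' : (∫ t in Set.Ioo (Real.pi - h') Real.pi, xt t ^ 2)
        ≤ 2/Real.pi * C * zeta' (4*β) * h' := by
      have he : (∫ t in Set.Ioo (Real.pi - h') Real.pi, xt t ^ 2)
          = ∫ t in Set.Ioo (Real.pi - h') Real.pi, x t ^ 2 :=
        setIntegral_congr_fun measurableSet_Ioo (fun t ht => by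
          have hm : t ∈ Set.Ioo 0 Real.pi := ⟨by linarith [ht.1], ht.2⟩
          rw [hxtdef, Set.indicator_of_mem hm])
      rw [he]; exact k2
    have hzero : ∀ t : ℝ, t ∉ Set.Ioc (-h') Real.pi → (xt (t+h') - xt t)^2 = 0 := by
      intro t ht
      rw [Set.mem_Ioc, not_and_or, not_lt, not_le] at ht
      have h1 : xt t = 0 := by
        rw [hxtdef]
        refine Set.indicator_of_notMem (fun hmem => ?_) _
        rcases ht with ht | ht
        · exact absurd hmem.1 (by linarith)
        · exact absurd hmem.2 (by linarith)
      have h2 : xt (t+h') = 0 := by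
        rw [hxtdef]
        refine Set.indicator_of_notMem (fun hmem => ?_) _
        rcases ht with ht | ht
        · exact absurd hmem.1 (by linarith)
        · exact absurd hmem.2 (by linarith)
      rw [h1, h2]
      simp
    have hrw : (∫ t : ℝ, (xt (t+h') - xt t)^2)
        = ∫ t in Set.Ioc (-h') Real.pi, (xt (t+h') - xt t)^2 := by
      rw [← integral_indicator measurableSet_Ioc]
      congr 1
      funext t
      by_cases ht : t ∈ Set.Ioc (-h') Real.pi
      · exact (Set.indicator_of_mem ht (fun t => (xt (t+h') - xt t)^2)).symm
      · rw [Set.indicator_of_notMem ht (fun t => (xt (t+h') - xt t)^2), hzero t ht]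
    have hsplit : Set.Ioc (-h') Real.pi
        = Set.Ioc (-h') 0 ∪ (Set.Ioc 0 (Real.pi - h') ∪ Set.Ioc (Real.pi - h') Real.pi) := by
      rw [Set.Ioc_union_Ioc_eq_Ioc (by linarith : (0:ℝ) ≤ Real.pi - h') (by linarith),
        Set.Ioc_union_Ioc_eq_Ioc (by linarith : -h' ≤ (0:ℝ)) hπ.le]
    have hfinIoc : ∀ p q : ℝ, volume (Set.Ioc p q) < ⊤ := fun p q => by
      rw [Real.volume_Ioc]; exact ENNReal.ofReal_lt_top
    have hint1 := hG_int h' _ measurableSet_Ioc (hfinIoc (-h') 0)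
    have hint2 := hG_int h' _ measurableSet_Ioc (hfinIoc 0 (Real.pi - h'))
    have hint3 := hG_int h' _ measurableSet_Ioc (hfinIoc (Real.pi - h') Real.pi)
    have hd13 : Disjoint (Set.Ioc (-h') 0) (Set.Ioc (Real.pi - h') Real.pi) := by
      rw [Set.Ioc_disjoint_Ioc]
      refine le_trans (min_le_left _ _) (le_max_of_le_right (by linarith))
    have hd1 : Disjoint (Set.Ioc (-h') 0)
        (Set.Ioc 0 (Real.pi - h') ∪ Set.Ioc (Real.pi - h') Real.pi) :=
      Set.disjoint_union_right.2 ⟨(Set.Ioc_disjoint_Ioc_of_le le_rfl), hd13⟩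
    rw [hrw, hsplit,
      setIntegral_union hd1 (measurableSet_Ioc.union measurableSet_Ioc) hint1 (hint2.union hint3),
      setIntegral_union (Set.Ioc_disjoint_Ioc_of_le le_rfl) measurableSet_Ioc hint2 hint3]
    have p1 : (∫ t in Set.Ioc (-h') 0, (xt (t+h') - xt t)^2) = ∫ t in Set.Ioo 0 h', xt t ^ 2 := by
      rw [integral_Ioc_eq_integral_Ioo]
      have e1 : (∫ t in Set.Ioo (-h') 0, (xt (t+h') - xt t)^2)
          = ∫ t in Set.Ioo (-h') 0, xt (t+h') ^ 2 :=
        setIntegral_congr_fun measurableSet_Ioo (fun t ht => by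
          have hz : xt t = 0 := by
            rw [hxtdef]
            exact Set.indicator_of_notMem (fun hmem => absurd hmem.1 (by linarith [ht.2])) _
          rw [hz, sub_zero])
      rw [e1]
      have := TransAux.setIntegral_translate (fun s => xt s ^ 2) h' (-h') 0
      simpa using this
    have p2 : (∫ t in Set.Ioc 0 (Real.pi - h'), (xt (t+h') - xt t)^2)
        = ∫ t in Set.Ioo 0 (Real.pi - h'), (xt (t+h') - xt t)^2 :=
      integral_Ioc_eq_integral_Ioo
    have p3 : (∫ t in Set.Ioc (Real.pi - h') Real.pi, (xt (t+h') - xt t)^2)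
        = ∫ t in Set.Ioo (Real.pi - h') Real.pi, xt t ^ 2 := by
      rw [integral_Ioc_eq_integral_Ioo]
      exact setIntegral_congr_fun measurableSet_Ioo (fun t ht => by
        have hz : xt (t+h') = 0 := by
          rw [hxtdef]
          exact Set.indicator_of_notMem (fun hmem => absurd hmem.2 (by linarith [ht.1])) _
        rw [hz, zero_sub, neg_sq])
    rw [p1, p2, p3]
    have hsum4 : (4/Real.pi * C * zeta' (4*β) + 4 * C * zeta' (4*β-1)) * h'
        = 2/Real.pi * C * zeta' (4*β) * h'
          + (4 * C * zeta' (4*β-1) * h' + 2/Real.pi * C * zeta' (4*β) * h') := by ring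
    rw [hsum4]
    exact add_le_add k1' (add_le_add k3 k2')
  rcases lt_trichotomy h 0 with hneg | hzero | hpos
  · have h0' : 0 < -h := by linarith
    have hπ' : -h < Real.pi := by rwa [abs_of_neg hneg] at habs
    have htrans : (∫ t : ℝ, (xt (t+h) - xt t)^2) = ∫ t : ℝ, (xt (t+(-h)) - xt t)^2 := by
      rw [← integral_add_right_eq_self (μ := volume) (fun t => (xt (t+h) - xt t)^2) (-h)]
      congr 1
      funext t
      have e : t + -h + h = t := by ring
      rw [e]
      ring
    rw [htrans, abs_of_neg hneg]
    exact main (-h) h0' hπ'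
  · subst hzero
    simp
  · rw [abs_of_pos hpos]
    exact main h hpos (by rwa [abs_of_pos hpos] at habs)
end
end
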